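/- arXiv:1808.01152 — 3 statements merged into one kernel-verified Lean document; each statement's English description precedes it below -/
import Mathlib

section
/- There is an absolute constant K such that for all d and all Y ⊆ E (the even side of Q_d) and positive integers x, b with b ≤ |Y|/2, the number of sets X ⊆ E with |X| = x, with at most b 2-components, and with each 2-component of X meeting Y, is at most C(|Y|, b) · d^{Kx}. The same bound holds with E replaced by O. -/
open Finset

abbrev V (d : ℕ) : Type := Fin d → Bool

def cube (d : ℕ) : SimpleGraph (V d) where
  Adj u v := (Finset.univ.filter fun i => u i ≠ v i).card = 1
  symm := by
    constructor
    intro u v h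
    have e : (Finset.univ.filter fun i => v i ≠ u i) = (Finset.univ.filter fun i => u i ≠ v i) := by
      apply Finset.filter_congr
      intro i _
      exact ne_comm
    rw [e]
    exact h
  loopless := by
    constructor
    intro u h
    simp at h

/-- a vertex of the hypercube is even if it has an even number of `true` coordinates. -/
def isEven {d : ℕ} (v : V d) : Prop := Even (Finset.univ.filter fun i => v i = true).card

/-- The neighborhood of a set of vertices. -/
def nbhd (d : ℕ) (X : Set (V d)) : Set (V d) := {u | ∃ v ∈ X, (cube d).Adj u v}

/-- `A` is 2-linked: any two of its vertices are joined by a chain of vertices of `A` in which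
consecutive vertices are at graph distance at most 2. -/
def TwoLinked (d : ℕ) (A : Set (V d)) : Prop :=
  ∀ x ∈ A, ∀ y ∈ A,
    Relation.ReflTransGen (fun a b => a ∈ A ∧ b ∈ A ∧ (cube d).dist a b ≤ 2) x y

/-- `C` is a 2-component of `A`: a maximal 2-linked (nonempty) subset of `A`. -/
def Is2Comp (d : ℕ) (A C : Set (V d)) : Prop :=
  C ⊆ A ∧ C.Nonempty ∧ TwoLinked d C ∧
    ∀ C' : Set (V d), C ⊆ C' → C' ⊆ A → TwoLinked d C' → C' = C

-- Part 1: cube basics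
section Basics
variable {d : ℕ}

lemma cube_adj_iff {a b : V d} : (cube d).Adj a b ↔ hammingDist a b = 1 := Iff.rfl

lemma cube_reachable (a b : V d) : (cube d).Reachable a b := by
  generalize h : hammingDist a b = n
  induction n generalizing a with
  | zero => rw [hammingDist_eq_zero] at h; rw [h]
  | succ n ih =>
    have hne : (Finset.univ.filter fun i => a i ≠ b i).Nonempty := by
      rw [← Finset.card_pos]
      have : hammingDist a b = (Finset.univ.filter fun i => a i ≠ b i).card := rfl
      omega
    obtain ⟨i, hi⟩ := hne
    simp only [Finset.mem_filter, Finset.mem_univ, true_and] at hi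
    set a' : V d := Function.update a i (b i) with ha'
    have hadj : (cube d).Adj a a' := by
      rw [cube_adj_iff]
      have : (Finset.univ.filter fun j => a j ≠ a' j) = {i} := by
        ext j
        simp only [Finset.mem_filter, Finset.mem_univ, true_and, Finset.mem_singleton, ha']
        constructor
        · intro hj
          by_contra hji
          simp [Function.update_of_ne hji] at hj
        · intro hj; subst hj; simp [Function.update_self, hi]
      rw [hammingDist, this, Finset.card_singleton]
    have hcard : hammingDist a' b = n := by
      have : (Finset.univ.filter fun j => a' j ≠ b j)
          = (Finset.univ.filter fun j => a j ≠ b j).erase i := by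
        ext j
        simp only [Finset.mem_filter, Finset.mem_univ, true_and, Finset.mem_erase, ha']
        by_cases hji : j = i
        · subst hji; simp [Function.update_self]
        · simp [Function.update_of_ne hji, hji]
      have h2 : hammingDist a' b = ((Finset.univ.filter fun j => a j ≠ b j).erase i).card := by
        rw [hammingDist, this]
      rw [h2, Finset.card_erase_of_mem (by simp [hi])]
      have : hammingDist a b = (Finset.univ.filter fun j => a j ≠ b j).card := rfl
      omega
    exact (hadj.reachable).trans (ih a' hcard)

lemma ham_le_length {a b : V d} (p : (cube d).Walk a b) : hammingDist a b ≤ p.length := by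
  induction p with
  | nil => simp
  | @cons u v w h p ih =>
    have h1 : hammingDist u v = 1 := h
    calc hammingDist u w ≤ hammingDist u v + hammingDist v w := hammingDist_triangle _ _ _
    _ ≤ 1 + p.length := by omega
    _ = (SimpleGraph.Walk.cons h p).length := by simp [SimpleGraph.Walk.length_cons]; omega

lemma ham_le_two_of_dist {a b : V d} (h : (cube d).dist a b ≤ 2) : hammingDist a b ≤ 2 := by
  obtain ⟨p, hp⟩ := (cube_reachable a b).exists_walk_length_eq_dist
  calc hammingDist a b ≤ p.length := ham_le_length p
  _ ≤ 2 := by rw [hp]; exact h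

end Basics
-- Part 2: components
section Comps
variable {d : ℕ}

def rel (d : ℕ) (A : Set (V d)) (a b : V d) : Prop :=
  a ∈ A ∧ b ∈ A ∧ (cube d).dist a b ≤ 2

lemma twoLinked_iff {A : Set (V d)} :
    TwoLinked d A ↔ ∀ x ∈ A, ∀ y ∈ A, Relation.ReflTransGen (rel d A) x y := Iff.rfl

lemma rel_symm {A : Set (V d)} : Symmetric (rel d A) := by
  intro a b ⟨h1, h2, h3⟩
  exact ⟨h2, h1, by rwa [SimpleGraph.dist_comm]⟩

lemma rel_mono {A B : Set (V d)} (h : A ⊆ B) {a b : V d} (hr : rel d A a b) : rel d B a b :=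
  ⟨h hr.1, h hr.2.1, hr.2.2⟩

lemma rtg_mono {A B : Set (V d)} (h : A ⊆ B) {a b : V d}
    (hr : Relation.ReflTransGen (rel d A) a b) : Relation.ReflTransGen (rel d B) a b :=
  Relation.ReflTransGen.mono (fun _ _ hx => rel_mono h hx) _ _ hr

def comp (d : ℕ) (A : Set (V d)) (v : V d) : Set (V d) :=
  {u | u ∈ A ∧ Relation.ReflTransGen (rel d A) v u}

lemma comp_subset {A : Set (V d)} {v : V d} : comp d A v ⊆ A := fun _ h => h.1

lemma mem_comp_self {A : Set (V d)} {v : V d} (hv : v ∈ A) : v ∈ comp d A v :=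
  ⟨hv, Relation.ReflTransGen.refl⟩

/-- any chain from `v` in `A` is in fact a chain in `comp d A v`. -/
lemma rtg_comp {A : Set (V d)} {v u : V d} (hv : v ∈ A)
    (h : Relation.ReflTransGen (rel d A) v u) :
    Relation.ReflTransGen (rel d (comp d A v)) v u := by
  induction h with
  | refl => exact Relation.ReflTransGen.refl
  | @tail b c hab hbc ih =>
    have hb : b ∈ comp d A v := ⟨hbc.1, hab⟩
    have hc : c ∈ comp d A v := ⟨hbc.2.1, hab.tail hbc⟩
    exact ih.tail ⟨hb, hc, hbc.2.2⟩

lemma comp_twoLinked {A : Set (V d)} {v : V d} (hv : v ∈ A) : TwoLinked d (comp d A v) := by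
  rw [twoLinked_iff]
  intro x hx y hy
  have h1 : Relation.ReflTransGen (rel d (comp d A v)) v x := rtg_comp hv hx.2
  have h2 : Relation.ReflTransGen (rel d (comp d A v)) v y := rtg_comp hv hy.2
  exact ((@Relation.ReflTransGen.symmetric _ _ ⟨fun _ _ h => rel_symm h⟩).symm _ _ h1).trans h2

lemma isComp_comp {A : Set (V d)} {v : V d} (hv : v ∈ A) : Is2Comp d A (comp d A v) := by
  refine ⟨comp_subset, ⟨v, mem_comp_self hv⟩, comp_twoLinked hv, ?_⟩
  intro C' hsub hCA hCl
  apply Set.Subset.antisymm _ hsub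
  intro u hu
  have hchain : Relation.ReflTransGen (rel d C') v u :=
    (twoLinked_iff.mp hCl) v (hsub (mem_comp_self hv)) u hu
  exact ⟨hCA hu, rtg_mono hCA hchain⟩

lemma isComp_eq_comp {A C : Set (V d)} (h : Is2Comp d A C) {v : V d} (hv : v ∈ C) :
    C = comp d A v := by
  obtain ⟨hCA, hne, hCl, hmax⟩ := h
  have hsub : C ⊆ comp d A v := by
    intro u hu
    exact ⟨hCA hu, rtg_mono hCA ((twoLinked_iff.mp hCl) v hv u hu)⟩
  exact (hmax (comp d A v) hsub comp_subset (comp_twoLinked (hCA hv))).symm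

lemma comps_disjoint {A C₁ C₂ : Set (V d)} (h1 : Is2Comp d A C₁) (h2 : Is2Comp d A C₂)
    {v : V d} (hv1 : v ∈ C₁) (hv2 : v ∈ C₂) : C₁ = C₂ := by
  rw [isComp_eq_comp h1 hv1, isComp_eq_comp h2 hv2]

lemma comp_conn {A : Set (V d)} {v : V d} (hv : v ∈ A) :
    ∀ u ∈ comp d A v, Relation.ReflTransGen (rel d (comp d A v)) v u :=
  fun _ hu => rtg_comp hv hu.2

end Comps
-- Part 3: cover walk
section Cover
variable {d : ℕ}

def step (d : ℕ) (a b : V d) : Prop := hammingDist a b ≤ 2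

lemma step_symm {a b : V d} (h : step d a b) : step d b a := by
  unfold step at *; rwa [hammingDist_comm]

lemma rel_step {A : Set (V d)} {a b : V d} (h : rel d A a b) : step d a b :=
  ham_le_two_of_dist h.2.2

lemma exit_lemma {A S : Set (V d)} {r v : V d} (hr : r ∈ S) (hv : v ∉ S)
    (h : Relation.ReflTransGen (rel d A) r v) :
    ∃ u w, u ∈ S ∧ w ∉ S ∧ rel d A u w := by
  induction h with
  | refl => exact absurd hr hv
  | @tail b c hab hbc ih =>
    by_cases hb : b ∈ S
    · exact ⟨b, c, hb, hv, hbc⟩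
    · exact ih hb

lemma ext_walk {A : Set (V d)} {r : V d}
    (hconn : ∀ v ∈ A, Relation.ReflTransGen (rel d A) r v) :
    ∀ (n : ℕ) (S : Set (V d)) (l : List (V d)), S ⊆ A → r ∈ S →
      (∀ v, v ∈ l ↔ v ∈ S) → l.Chain' (step d) → l.head? = some r →
      (A \ S).ncard = n →
      ∃ l' : List (V d), (∀ v, v ∈ l' ↔ v ∈ A) ∧ l'.Chain' (step d) ∧
        l'.head? = some r ∧ l'.length ≤ l.length + 2 * n := by
  intro n
  induction n with
  | zero =>
    intro S l hSA hrS hmem hch hh hc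
    have hfin : (A \ S).Finite := Set.toFinite _
    have hds : A \ S = ∅ := (Set.ncard_eq_zero hfin).mp hc
    have hAS : A = S := Set.Subset.antisymm (by
      intro v hv
      by_contra hvS
      exact absurd (Set.mem_diff_of_mem hv hvS) (by rw [hds]; simp)) hSA
    exact ⟨l, fun v => (hmem v).trans (by rw [hAS]), hch, hh, by omega⟩
  | succ n ih =>
    intro S l hSA hrS hmem hch hh hc
    have hne : (A \ S).Nonempty := by
      rw [← Set.ncard_pos (Set.toFinite _)]; omega
    obtain ⟨v, hvA, hvS⟩ := hne
    obtain ⟨u, w, huS, hwS, hrel⟩ := exit_lemma hrS hvS (hconn v hvA)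
    have hul : u ∈ l := (hmem u).2 huS
    obtain ⟨l₁, l₂, hl⟩ := List.append_of_mem hul
    have hstep : step d u w := rel_step hrel
    have hch' : (l₁ ++ u :: w :: u :: l₂).Chain' (step d) := by
      rw [hl] at hch
      simp only [List.Chain', List.isChain_append] at hch ⊢
      refine ⟨hch.1, ?_, ?_⟩
      · exact List.isChain_cons_cons.mpr ⟨hstep, List.isChain_cons_cons.mpr ⟨step_symm hstep, hch.2.1⟩⟩
      · intro x hx y hy
        simp only [List.head?_cons, Option.mem_def, Option.some_inj] at hy
        subst hy
        exact hch.2.2 x hx u (by simp)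
    have hh' : (l₁ ++ u :: w :: u :: l₂).head? = some r := by
      rw [hl] at hh
      cases l₁ with
      | nil => simpa using hh
      | cons a t => simpa using hh
    have hmem' : ∀ x, x ∈ (l₁ ++ u :: w :: u :: l₂) ↔ x ∈ insert w S := by
      intro x
      rw [hl] at hmem
      have := hmem x
      simp only [List.mem_append, List.mem_cons] at this ⊢
      simp only [Set.mem_insert_iff]
      tauto
    have hc' : (A \ insert w S).ncard = n := by
      have he : A \ insert w S = (A \ S) \ {w} := by
        ext z; simp only [Set.mem_diff, Set.mem_insert_iff, Set.mem_singleton_iff]; tauto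
      rw [he, Set.ncard_diff_singleton_of_mem ((Set.mem_diff _).mpr ⟨hrel.2.1, hwS⟩)]
      omega
    obtain ⟨l'', h1, h2, h3, h4⟩ := ih (insert w S) (l₁ ++ u :: w :: u :: l₂)
      (Set.insert_subset hrel.2.1 hSA) (Set.mem_insert_of_mem _ hrS) hmem' hch' hh' hc'
    refine ⟨l'', h1, h2, h3, ?_⟩
    have : (l₁ ++ u :: w :: u :: l₂).length = l.length + 2 := by rw [hl]; simp; omega
    omega

lemma cover_walk {A : Set (V d)} {r : V d} (hr : r ∈ A)
    (hconn : ∀ v ∈ A, Relation.ReflTransGen (rel d A) r v) :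
    ∃ l : List (V d), l.head? = some r ∧ l.Chain' (step d) ∧
      (∀ v, v ∈ l ↔ v ∈ A) ∧ l.length ≤ 2 * A.ncard := by
  obtain ⟨l, h1, h2, h3, h4⟩ := ext_walk hconn (A \ {r}).ncard {r} [r]
    (by simpa using hr) rfl (by simp) (List.isChain_singleton _) rfl rfl
  have hpos : 0 < A.ncard := (Set.ncard_pos (Set.toFinite _)).mpr ⟨r, hr⟩
  have : (A \ {r}).ncard = A.ncard - 1 := Set.ncard_diff_singleton_of_mem hr
  exact ⟨l, h3, h2, h1, by simp at h4; omega⟩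

end Cover
-- Part 4: step encoding
section Enc
variable {d : ℕ}

abbrev Tok (d : ℕ) : Type := Option (Fin d) × Option (Fin d)

def flipO (a : V d) : Option (Fin d) → V d
  | none => a
  | some i => Function.update a i (!a i)

def decodeStep (a : V d) (t : Tok d) : V d := flipO (flipO a t.1) t.2

def dset (a b : V d) : Finset (Fin d) := Finset.univ.filter fun i => a i ≠ b i

noncomputable def encStep (a b : V d) : Tok d :=
  (((dset a b).sort (· ≤ ·))[0]?, ((dset a b).sort (· ≤ ·))[1]?)

lemma eq_flip_dset (a b : V d) : ∀ i, b i = if i ∈ dset a b then !(a i) else a i := by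
  intro i
  by_cases h : i ∈ dset a b
  · simp only [h, if_true]
    simp only [dset, Finset.mem_filter, Finset.mem_univ, true_and] at h
    cases hai : a i <;> cases hbi : b i <;> simp_all
  · simp only [h, if_false]
    simp only [dset, Finset.mem_filter, Finset.mem_univ, true_and, not_not] at h
    exact h.symm

lemma decodeStep_encStep {a b : V d} (h : hammingDist a b ≤ 2) :
    decodeStep a (encStep a b) = b := by
  have hcard : (dset a b).card = hammingDist a b := rfl
  have hlen : ((dset a b).sort (· ≤ ·)).length = (dset a b).card := Finset.length_sort _
  have htf : ((dset a b).sort (· ≤ ·)).toFinset = dset a b := Finset.sort_toFinset _ _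
  have hnd : ((dset a b).sort (· ≤ ·)).Nodup := Finset.sort_nodup _ _
  have hb : ∀ i, b i = if i ∈ dset a b then !(a i) else a i := eq_flip_dset a b
  rcases hl : (dset a b).sort (· ≤ ·) with _ | ⟨i, _ | ⟨j, rest⟩⟩
  · rw [hl] at htf
    have hd : dset a b = ∅ := by rw [← htf]; rfl
    have he : encStep a b = (none, none) := by simp [encStep, hl]
    rw [he]
    funext k
    simp only [decodeStep, flipO]
    rw [hb k, hd]; simp
  · rw [hl] at htf
    have hd : dset a b = {i} := by rw [← htf]; simp
    have he : encStep a b = (some i, none) := by simp [encStep, hl]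
    rw [he]
    funext k
    simp only [decodeStep, flipO]
    rw [hb k, hd]
    by_cases hki : k = i
    · subst hki; simp
    · simp [Function.update_of_ne hki, hki]
  · rw [hl] at htf hnd hlen
    have hc2 : (dset a b).card ≤ 2 := by rw [hcard]; exact h
    have hrest : rest = [] := by
      rw [← List.length_eq_zero_iff]
      simp only [List.length_cons] at hlen
      omega
    subst hrest
    have hij : i ≠ j := by simpa using hnd
    have hd : dset a b = {i, j} := by rw [← htf]; ext; simp
    have he : encStep a b = (some i, some j) := by simp [encStep, hl]
    rw [he]
    funext k
    simp only [decodeStep, flipO]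
    rw [hb k, hd]
    by_cases hki : k = i
    · subst hki
      simp [Function.update_of_ne (Ne.symm hij), Function.update_self, hij]
    · by_cases hkj : k = j
      · subst hkj
        simp [Function.update_self, Function.update_of_ne hki, hki]
      · simp [Function.update_of_ne hki, Function.update_of_ne hkj, hki, hkj]

end Enc
-- Part 5: list encoding / decoding
section ListEnc
variable {d : ℕ}

noncomputable def encL : List (V d) → List (Tok d)
  | [] => []
  | [_] => []
  | a :: b :: rest => encStep a b :: encL (b :: rest)

lemma encL_length : ∀ l : List (V d), (encL l).length + 1 ≤ l.length + 1
  | [] => by simp [encL]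
  | [a] => by simp [encL]
  | a :: b :: rest => by
      rw [encL]
      have := encL_length (b :: rest)
      simp at this ⊢
      omega

noncomputable def decAll : List (V d) → V d → List (Option (Tok d)) → List (V d)
  | _, _, [] => []
  | rs, cur, (some t) :: rest => decodeStep cur t :: decAll rs (decodeStep cur t) rest
  | [], _, none :: _ => []
  | r :: rs, _, none :: rest => r :: decAll rs r rest

lemma decAll_walk : ∀ (w : List (V d)) (cur : V d) (rs : List (V d))
    (rest : List (Option (Tok d))), (cur :: w).Chain' (step d) →
    decAll rs cur ((encL (cur :: w)).map some ++ rest)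
      = w ++ decAll rs ((cur :: w).getLast (by simp)) rest := by
  intro w
  induction w with
  | nil => intro cur rs rest _; simp [encL, decAll]
  | cons b w' ih =>
    intro cur rs rest hch
    simp only [List.Chain', List.isChain_cons_cons] at hch
    have hs : step d cur b := hch.1
    have hdec : decodeStep cur (encStep cur b) = b := decodeStep_encStep hs
    rw [encL, List.map_cons, List.cons_append, decAll, hdec, ih b rs rest hch.2]
    simp [List.getLast_cons]

lemma decAll_join : ∀ (ws : List (List (V d))) (rs : List (V d)) (cur : V d),
    List.Forall₂ (fun r w => w.head? = some r ∧ w.Chain' (step d)) rs ws →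
    decAll rs cur ((ws.map (fun w => none :: (encL w).map some)).flatten) = ws.flatten := by
  intro ws
  induction ws with
  | nil => intro rs cur h; cases h; simp [decAll]
  | cons w ws' ih =>
    intro rs cur h
    cases h with
    | cons hw hws =>
      rename_i r rs'
      obtain ⟨hhead, hch⟩ := hw
      cases w with
      | nil => simp at hhead
      | cons a w'' =>
        have har : a = r := by simpa using hhead
        subst har
        rw [List.map_cons, List.flatten_cons, List.cons_append]
        show decAll (a :: rs') cur (none :: ((encL (a :: w'')).map some
          ++ (ws'.map (fun w => none :: (encL w).map some)).flatten)) = _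
        rw [decAll]
        rw [decAll_walk w'' a rs' _ hch]
        rw [ih rs' _ hws]
        simp

end ListEnc
-- Part 6: encoding a configuration X
section Main
variable {d : ℕ}

attribute [local instance] Classical.propDecidable

noncomputable def rootOf (Y C : Set (V d)) : V d :=
  if h : (C ∩ Y).Nonempty then h.some else (fun _ => false)

noncomputable def rootsF (Y X : Set (V d)) : Finset (V d) :=
  (Set.toFinite {C | Is2Comp d X C}).toFinset.image (rootOf Y)

noncomputable def sortedRoots (Y X : Set (V d)) : List (V d) :=
  ((((rootsF Y X).image (Fintype.equivFin (V d))).sort (· ≤ ·)).map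
    (Fintype.equivFin (V d)).symm)

lemma mem_sortedRoots {Y X : Set (V d)} {r : V d} :
    r ∈ sortedRoots Y X ↔ r ∈ rootsF Y X := by
  rw [sortedRoots, List.mem_map]
  constructor
  · rintro ⟨a, ha, rfl⟩
    rw [Finset.mem_sort, Finset.mem_image] at ha
    obtain ⟨u, hu, rfl⟩ := ha
    simpa using hu
  · intro hr
    exact ⟨Fintype.equivFin (V d) r, by
      rw [Finset.mem_sort, Finset.mem_image]; exact ⟨r, hr, rfl⟩, by simp⟩

lemma sortedRoots_nodup {Y X : Set (V d)} : (sortedRoots Y X).Nodup :=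
  (Finset.sort_nodup _ _).map (Equiv.injective _)

lemma sortedRoots_sum (Y X : Set (V d)) (f : V d → ℕ) :
    ((sortedRoots Y X).map f).sum = ∑ r ∈ rootsF Y X, f r := by
  rw [sortedRoots, List.map_map]
  have h := Finset.sort_perm_toList ((rootsF Y X).image (Fintype.equivFin (V d))) (· ≤ ·)
  rw [List.Perm.sum_eq (h.map _), Finset.sum_map_toList]
  rw [Finset.sum_image (by intro x _ y _ h; exact Equiv.injective _ h)]
  simp

noncomputable def walkOf (X : Set (V d)) (r : V d) : List (V d) :=
  if h : r ∈ X then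
    (cover_walk (mem_comp_self h) (comp_conn h)).choose
  else []

lemma walkOf_spec {X : Set (V d)} {r : V d} (h : r ∈ X) :
    (walkOf X r).head? = some r ∧ (walkOf X r).Chain' (step d) ∧
      (∀ v, v ∈ walkOf X r ↔ v ∈ comp d X r) ∧
      (walkOf X r).length ≤ 2 * (comp d X r).ncard := by
  rw [walkOf, dif_pos h]
  exact (cover_walk (mem_comp_self h) (comp_conn h)).choose_spec

noncomputable def encX (Y X : Set (V d)) : List (Option (Tok d)) :=
  ((sortedRoots Y X).map (fun r => none :: (encL (walkOf X r)).map some)).flatten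

lemma roots_spec {Y X : Set (V d)}
    (hmeet : ∀ C : Set (V d), Is2Comp d X C → (C ∩ Y).Nonempty) :
    ∀ r ∈ rootsF Y X, r ∈ X ∧ r ∈ Y ∧ Is2Comp d X (comp d X r)
      ∧ rootOf Y (comp d X r) = r := by
  intro r hr
  rw [rootsF, Finset.mem_image] at hr
  obtain ⟨C, hC, hCr⟩ := hr
  rw [Set.Finite.mem_toFinset] at hC
  have hCY : (C ∩ Y).Nonempty := hmeet C hC
  have hreq : rootOf Y C = hCY.some := by rw [rootOf]; exact dif_pos hCY
  have hrC : r ∈ C ∩ Y := by rw [← hCr, hreq]; exact hCY.some_mem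
  have hcomp : comp d X r = C := (isComp_eq_comp hC hrC.1).symm
  rw [hcomp]
  exact ⟨hC.1 hrC.1, hrC.2, hC, hCr⟩

lemma roots_cover {Y X : Set (V d)}
    (hmeet : ∀ C : Set (V d), Is2Comp d X C → (C ∩ Y).Nonempty) {v : V d} (hv : v ∈ X) :
    ∃ r ∈ rootsF Y X, v ∈ comp d X r := by
  have hC : Is2Comp d X (comp d X v) := isComp_comp hv
  have hCY := hmeet _ hC
  set r := rootOf Y (comp d X v) with hrdef
  have hreq : r = hCY.some := by rw [hrdef, rootOf]; exact dif_pos hCY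
  have hrC : r ∈ comp d X v ∩ Y := by rw [hreq]; exact hCY.some_mem
  refine ⟨r, ?_, ?_⟩
  · rw [rootsF, Finset.mem_image]
    exact ⟨comp d X v, by rw [Set.Finite.mem_toFinset]; exact hC, rfl⟩
  · rw [← isComp_eq_comp hC hrC.1]
    exact mem_comp_self hv

lemma decAll_encX {Y X : Set (V d)}
    (hmeet : ∀ C : Set (V d), Is2Comp d X C → (C ∩ Y).Nonempty) (cur : V d) :
    ∀ v, v ∈ decAll (sortedRoots Y X) cur (encX Y X) ↔ v ∈ X := by
  have hwalk : ∀ r ∈ sortedRoots Y X,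
      (walkOf X r).head? = some r ∧ (walkOf X r).Chain' (step d) := by
    intro r hr
    rw [mem_sortedRoots] at hr
    obtain ⟨hrX, -, -, -⟩ := roots_spec hmeet r hr
    exact ⟨(walkOf_spec hrX).1, (walkOf_spec hrX).2.1⟩
  have hforall : List.Forall₂ (fun r w => w.head? = some r ∧ w.Chain' (step d))
      (sortedRoots Y X) ((sortedRoots Y X).map (walkOf X)) := by
    rw [List.forall₂_map_right_iff]
    exact List.forall₂_same.mpr hwalk
  have hdec := decAll_join ((sortedRoots Y X).map (walkOf X)) (sortedRoots Y X) cur hforall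
  have hEnc : encX Y X = (((sortedRoots Y X).map (walkOf X)).map
      (fun w => none :: (encL w).map some)).flatten := by
    rw [encX, List.map_map]; rfl
  rw [hEnc, hdec]
  intro v
  rw [List.mem_flatten]
  constructor
  · rintro ⟨w, hw, hvw⟩
    rw [List.mem_map] at hw
    obtain ⟨r, hr, hwr⟩ := hw
    rw [mem_sortedRoots] at hr
    obtain ⟨hrX, -, -, -⟩ := roots_spec hmeet r hr
    subst hwr
    exact comp_subset (((walkOf_spec hrX).2.2.1 v).1 hvw)
  · intro hv
    obtain ⟨r, hr, hvr⟩ := roots_cover hmeet hv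
    have hrX := (roots_spec hmeet r hr).1
    exact ⟨walkOf X r, List.mem_map.mpr ⟨r, mem_sortedRoots.mpr hr, rfl⟩,
      ((walkOf_spec hrX).2.2.1 v).2 hvr⟩

end Main
-- Part 7: cardinality bounds
section Bounds
variable {d : ℕ}

lemma choose_le_choose_of_le {n c b : ℕ} (hcb : c ≤ b) (h2b : 2 * b ≤ n) :
    n.choose c ≤ n.choose b := by
  induction b with
  | zero =>
    have : c = 0 := by omega
    subst this; exact le_refl _
  | succ b ih =>
    rcases Nat.eq_or_lt_of_le hcb with rfl | hlt
    · exact le_refl _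
    · have h1 : n.choose c ≤ n.choose b := ih (by omega) (by omega)
      have h2 : n.choose b * (b + 1) ≤ n.choose (b + 1) * (b + 1) := by
        rw [Nat.choose_succ_right_eq]
        exact Nat.mul_le_mul_left _ (by omega)
      have h3 : n.choose b ≤ n.choose (b + 1) := Nat.le_of_mul_le_mul_right h2 (by omega)
      omega

lemma sum_comp_ncard_le {Y X : Set (V d)}
    (hmeet : ∀ C : Set (V d), Is2Comp d X C → (C ∩ Y).Nonempty) :
    ∑ r ∈ rootsF Y X, (comp d X r).ncard ≤ X.ncard := by
  classical
  set t : V d → Finset (V d) := fun r => (Set.toFinite (comp d X r)).toFinset with ht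
  have hdisj : ∀ r₁ ∈ rootsF Y X, ∀ r₂ ∈ rootsF Y X, r₁ ≠ r₂ → Disjoint (t r₁) (t r₂) := by
    intro r₁ h₁ r₂ h₂ hne
    rw [Finset.disjoint_left]
    intro v hv1 hv2
    rw [ht, Set.Finite.mem_toFinset] at hv1 hv2
    have e1 := roots_spec hmeet r₁ h₁
    have e2 := roots_spec hmeet r₂ h₂
    have : comp d X r₁ = comp d X r₂ := comps_disjoint e1.2.2.1 e2.2.2.1 hv1 hv2
    apply hne
    rw [← e1.2.2.2, ← e2.2.2.2, this]
  have hsum : ∑ r ∈ rootsF Y X, (t r).card = ((rootsF Y X).biUnion t).card :=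
    (Finset.card_biUnion hdisj).symm
  have hsub : (rootsF Y X).biUnion t ⊆ (Set.toFinite X).toFinset := by
    intro v hv
    rw [Finset.mem_biUnion] at hv
    obtain ⟨r, hr, hvr⟩ := hv
    rw [ht, Set.Finite.mem_toFinset] at hvr
    rw [Set.Finite.mem_toFinset]
    exact comp_subset hvr
  have hXcard : X.ncard = (Set.toFinite X).toFinset.card := Set.ncard_eq_toFinset_card _ _
  have heach : ∀ r, (comp d X r).ncard = (t r).card := by
    intro r; rw [ht]; exact Set.ncard_eq_toFinset_card _ _
  calc ∑ r ∈ rootsF Y X, (comp d X r).ncard = ∑ r ∈ rootsF Y X, (t r).card := by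
        exact Finset.sum_congr rfl (fun r _ => heach r)
  _ = ((rootsF Y X).biUnion t).card := hsum
  _ ≤ (Set.toFinite X).toFinset.card := Finset.card_le_card hsub
  _ = X.ncard := hXcard.symm

lemma rootsF_card_le_x {Y X : Set (V d)}
    (hmeet : ∀ C : Set (V d), Is2Comp d X C → (C ∩ Y).Nonempty) :
    (rootsF Y X).card ≤ X.ncard := by
  classical
  have hsub : rootsF Y X ⊆ (Set.toFinite X).toFinset := by
    intro r hr
    rw [Set.Finite.mem_toFinset]
    exact (roots_spec hmeet r hr).1
  calc (rootsF Y X).card ≤ (Set.toFinite X).toFinset.card := Finset.card_le_card hsub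
  _ = X.ncard := (Set.ncard_eq_toFinset_card _ _).symm

lemma rootsF_card_le_b {Y X : Set (V d)} :
    (rootsF Y X).card ≤ {C : Set (V d) | Is2Comp d X C}.ncard := by
  calc (rootsF Y X).card ≤ (Set.toFinite {C | Is2Comp d X C}).toFinset.card :=
        Finset.card_image_le
  _ = _ := (Set.ncard_eq_toFinset_card _ _).symm

lemma encX_length_le {Y X : Set (V d)}
    (hmeet : ∀ C : Set (V d), Is2Comp d X C → (C ∩ Y).Nonempty) :
    (encX Y X).length ≤ 3 * X.ncard := by
  have h1 : (encX Y X).length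
      = ((sortedRoots Y X).map (fun r => 1 + (encL (walkOf X r)).length)).sum := by
    rw [encX, List.length_flatten, List.map_map]
    congr 1
    apply List.map_congr_left
    intro r _
    simp [Nat.add_comm]
  rw [h1, sortedRoots_sum]
  have hbound : ∀ r ∈ rootsF Y X, 1 + (encL (walkOf X r)).length
      ≤ 1 + 2 * (comp d X r).ncard := by
    intro r hr
    have hrX := (roots_spec hmeet r hr).1
    have := encL_length (walkOf X r)
    have := (walkOf_spec hrX).2.2.2
    omega
  calc ∑ r ∈ rootsF Y X, (1 + (encL (walkOf X r)).length)
      ≤ ∑ r ∈ rootsF Y X, (1 + 2 * (comp d X r).ncard) := Finset.sum_le_sum hbound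
  _ = (rootsF Y X).card + 2 * ∑ r ∈ rootsF Y X, (comp d X r).ncard := by
      rw [Finset.sum_add_distrib, Finset.sum_const, Finset.mul_sum]
      simp [Finset.mul_sum]
  _ ≤ X.ncard + 2 * X.ncard := by
      have := rootsF_card_le_x hmeet
      have := sum_comp_ncard_le hmeet
      omega
  _ = 3 * X.ncard := by ring

end Bounds

/-- Counting `x`-element subsets `X` of one side of the bipartition with at most `b`
2-components, each 2-component meeting `Y`:  there are at most `C(|Y|, b) · d^{Kx}` of them,
for an absolute constant `K`. -/
theorem count_linked_sets_rooted_in :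
    ∃ K : ℕ, ∀ d : ℕ, ∀ P : Set (V d), (P = {v | isEven v} ∨ P = {v | ¬ isEven v}) →
      ∀ Y : Set (V d), Y ⊆ P → ∀ x b : ℕ, 0 < x → 0 < b → 2 * b ≤ Y.ncard →
        (Nat.card {X : Set (V d) // X ⊆ P ∧ X.ncard = x ∧
            {C : Set (V d) | Is2Comp d X C}.ncard ≤ b ∧
            ∀ C : Set (V d), Is2Comp d X C → (C ∩ Y).Nonempty} : ℝ) ≤
          (Y.ncard.choose b : ℝ) * (d : ℝ) ^ (K * x) := by
  classical
  use 17
  intro d P hP Y hYP x b hx hb h2b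
  by_cases hd : d ≤ 1
  · exfalso
    have hPsub : P.Subsingleton := by
      interval_cases d
      · intro u _ v _
        funext i
        exact i.elim0
      · have keyE : ∀ w : V 1, Even (Finset.univ.filter fun i => w i = true).card
            → w 0 = false := by decide
        have keyO : ∀ w : V 1, ¬ Even (Finset.univ.filter fun i => w i = true).card
            → w 0 = true := by decide
        intro u hu v hv
        funext i
        have hi : i = 0 := Subsingleton.elim i 0
        subst hi
        rcases hP with rfl | rfl
        · rw [keyE u hu, keyE v hv]
        · rw [keyO u hu, keyO v hv]
    have hYsub : Y.Subsingleton := hPsub.anti hYP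
    have : Y.ncard ≤ 1 := by
      rcases hYsub.eq_empty_or_singleton with rfl | ⟨a, rfl⟩
      · simp
      · simp
    omega
  push_neg at hd
  have hd2 : 2 ≤ d := hd
  have hYfin : Y.Finite := Set.toFinite Y
  set YF := hYfin.toFinset with hYF
  have hYcard : YF.card = Y.ncard := (Set.ncard_eq_toFinset_card Y _).symm
  set m := min b x with hm
  set AF := (Finset.range (m+1)).biUnion (fun c => Finset.powersetCard c YF) with hAF
  set L := 3 * x with hL
  set St := {X : Set (V d) // X ⊆ P ∧ X.ncard = x ∧
      {C : Set (V d) | Is2Comp d X C}.ncard ≤ b ∧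
      ∀ C : Set (V d), Is2Comp d X C → (C ∩ Y).Nonempty} with hSt
  have hRAF : ∀ p : St, rootsF Y p.1 ∈ AF := by
    rintro ⟨X, hXP, hXx, hXb, hXmeet⟩
    rw [hAF, Finset.mem_biUnion]
    refine ⟨(rootsF Y X).card, ?_, ?_⟩
    · rw [Finset.mem_range]
      have h1 : (rootsF Y X).card ≤ x := by rw [← hXx]; exact rootsF_card_le_x hXmeet
      have h2 : (rootsF Y X).card ≤ b := le_trans rootsF_card_le_b hXb
      omega
    · rw [Finset.mem_powersetCard]
      refine ⟨?_, rfl⟩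
      intro r hr
      rw [hYF, Set.Finite.mem_toFinset]
      exact (roots_spec hXmeet r hr).2.1
  set Φ : St → {R : Finset (V d) // R ∈ AF} × (Fin (L+1) → Option (Option (Tok d))) :=
    fun p => (⟨rootsF Y p.1, hRAF p⟩, fun i => (encX Y p.1)[(i : ℕ)]?) with hΦ
  have hinj : Function.Injective Φ := by
    rintro ⟨X₁, hX₁⟩ ⟨X₂, hX₂⟩ heq
    rw [hΦ, Prod.mk.injEq, Subtype.mk.injEq] at heq
    obtain ⟨hR, hF⟩ := heq
    have hmeet₁ := hX₁.2.2.2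
    have hmeet₂ := hX₂.2.2.2
    have hlen₁ : (encX Y X₁).length ≤ L := by
      rw [hL, ← hX₁.2.1]; exact encX_length_le hmeet₁
    have hlen₂ : (encX Y X₂).length ≤ L := by
      rw [hL, ← hX₂.2.1]; exact encX_length_le hmeet₂
    have henc : encX Y X₁ = encX Y X₂ := by
      apply List.ext_getElem?
      intro n
      by_cases hn : n < L + 1
      · exact congrFun hF ⟨n, hn⟩
      · rw [List.getElem?_eq_none (by omega), List.getElem?_eq_none (by omega)]
    have hs : sortedRoots Y X₁ = sortedRoots Y X₂ := by
      rw [sortedRoots, sortedRoots, hR]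
    apply Subtype.ext
    ext v
    rw [← decAll_encX hmeet₁ (fun _ => false) v, ← decAll_encX hmeet₂ (fun _ => false) v,
      hs, henc]
  have hcount := Nat.card_le_card_of_injective Φ hinj
  have hTgt : Nat.card ({R : Finset (V d) // R ∈ AF} × (Fin (L+1) → Option (Option (Tok d))))
      = AF.card * ((d+1)*(d+1)+2) ^ (L+1) := by
    rw [Nat.card_prod, Nat.card_eq_fintype_card, Nat.card_eq_fintype_card, Fintype.card_coe,
      Fintype.card_fun]
    congr 1
    simp [Fintype.card_option, Fintype.card_prod]
  have hAFcard : AF.card ≤ (m+1) * Y.ncard.choose b := by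
    calc AF.card ≤ ∑ c ∈ Finset.range (m+1), (Finset.powersetCard c YF).card :=
          Finset.card_biUnion_le
    _ = ∑ c ∈ Finset.range (m+1), (Y.ncard).choose c := by
        apply Finset.sum_congr rfl
        intro c _
        rw [Finset.card_powersetCard, hYcard]
    _ ≤ ∑ c ∈ Finset.range (m+1), Y.ncard.choose b := by
        apply Finset.sum_le_sum
        intro c hc
        rw [Finset.mem_range] at hc
        exact choose_le_choose_of_le (by omega) h2b
    _ = (m+1) * Y.ncard.choose b := by
        rw [Finset.sum_const, Finset.card_range, smul_eq_mul]
  have hpow : (m+1) * ((d+1)*(d+1)+2) ^ (L+1) ≤ d ^ (17 * x) := by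
    have hA : (d+1)*(d+1)+2 ≤ d^4 := by
      have h1 : 2*d ≤ d*d := Nat.mul_le_mul_right d hd2
      have h3 : 3 ≤ d*d := by omega
      have h2 : 3*(d*d) ≤ (d*d)*(d*d) := Nat.mul_le_mul_right (d*d) h3
      have he : d^4 = (d*d)*(d*d) := by ring
      have hexp : (d+1)*(d+1)+2 = d*d + 2*d + 3 := by ring
      omega
    have h1 : ((d+1)*(d+1)+2) ^ (L+1) ≤ (d^4) ^ (L+1) := Nat.pow_le_pow_left hA _
    have h2 : (d^4) ^ (L+1) = d ^ (4*(L+1)) := by rw [← pow_mul]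
    have h3 : m + 1 ≤ 2 ^ x := by
      have : x < 2 ^ x := Nat.lt_two_pow_self
      have : m ≤ x := min_le_right _ _
      omega
    have h4 : (2:ℕ) ^ x ≤ d ^ x := Nat.pow_le_pow_left hd2 x
    calc (m+1) * ((d+1)*(d+1)+2) ^ (L+1) ≤ d ^ x * d ^ (4*(L+1)) := by
          apply Nat.mul_le_mul (le_trans h3 h4)
          rw [← h2]; exact h1
    _ = d ^ (x + 4*(L+1)) := by rw [← pow_add]
    _ ≤ d ^ (17 * x) := Nat.pow_le_pow_right (by omega) (by rw [hL]; omega)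
  have hnat : Nat.card St ≤ Y.ncard.choose b * d ^ (17 * x) := by
    calc Nat.card St ≤ AF.card * ((d+1)*(d+1)+2) ^ (L+1) := by rw [← hTgt]; exact hcount
    _ ≤ ((m+1) * Y.ncard.choose b) * ((d+1)*(d+1)+2) ^ (L+1) :=
        Nat.mul_le_mul_right _ hAFcard
    _ = Y.ncard.choose b * ((m+1) * ((d+1)*(d+1)+2) ^ (L+1)) := by ring
    _ ≤ Y.ncard.choose b * d ^ (17 * x) := Nat.mul_le_mul_left _ hpow
  have : ((Nat.card St : ℕ) : ℝ) ≤ ((Y.ncard.choose b * d ^ (17 * x) : ℕ) : ℝ) :=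
    Nat.cast_le.mpr hnat
  rw [hSt] at this ⊢
  push_cast at this
  convert this using 2
end

section
/- Let X = (X_1, ..., X_k) be a random vector whose coordinates take finitely many values, and let α : 2^{[k]} → [0,∞) satisfy ∑_{A : A ∋ i} α_A = 1 for every i ∈ [k]. Then H(X) ≤ ∑_{A ⊆ [k]} α_A · H(X_A), where X_A = (X_i : i ∈ A). -/
open scoped Classical in
/-- The probability that the random variable `X` (on the finite probability space `(Ω, p)`)
takes the value `t`. -/
noncomputable def pr {Ω T : Type*} [Fintype Ω] (p : Ω → ℝ) (X : Ω → T) (t : T) : ℝ :=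
  ∑ ω : Ω, if X ω = t then p ω else 0

/-- The binary (Shannon) entropy of the random variable `X` on the finite probability
space `(Ω, p)`: `H(X) = ∑_t P(X = t) log₂ (1 / P(X = t))`. -/
noncomputable def ent {Ω T : Type*} [Fintype Ω] [Fintype T] (p : Ω → ℝ) (X : Ω → T) : ℝ :=
  ∑ t : T, pr p X t * Real.logb 2 (pr p X t)⁻¹

section ShearerAux
open Finset Real


/-- Generalized Hölder / weighted power-mean inequality over a finite sum. -/
lemma shearer_holder {ι γ : Type*} [Fintype γ] (J : Finset ι) (w : ι → ℝ) (f : ι → γ → ℝ)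
    (hw : ∀ j ∈ J, 0 ≤ w j) (hw1 : ∑ j ∈ J, w j = 1)
    (hf : ∀ j ∈ J, ∀ x, 0 ≤ f j x) :
    ∑ x : γ, ∏ j ∈ J, (f j x) ^ (w j) ≤ ∏ j ∈ J, (∑ x : γ, f j x) ^ (w j) := by
  set F : ι → ℝ := fun j => ∑ x : γ, f j x with hF
  have hF0 : ∀ j ∈ J, 0 ≤ F j := fun j hj => Finset.sum_nonneg fun x _ => hf j hj x
  by_cases hex : ∃ j ∈ J, F j = 0 ∧ w j ≠ 0
  · obtain ⟨j, hj, hFj, hwj⟩ := hex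
    have hfj : ∀ x : γ, f j x = 0 := by
      intro x
      have := (Finset.sum_eq_zero_iff_of_nonneg (fun x _ => hf j hj x)).1 hFj
      exact this x (Finset.mem_univ x)
    have hL : ∑ x : γ, ∏ j' ∈ J, (f j' x) ^ (w j') = 0 := by
      apply Finset.sum_eq_zero
      intro x _
      apply Finset.prod_eq_zero hj
      rw [hfj x]
      exact Real.zero_rpow hwj
    rw [hL]
    exact Finset.prod_nonneg fun j' hj' => Real.rpow_nonneg (hF0 j' hj') _
  · push_neg at hex
    -- every j with F j = 0 has w j = 0
    have key : ∀ x : γ, ∏ j ∈ J, (f j x) ^ (w j)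
        = (∏ j ∈ J, (F j) ^ (w j)) * ∏ j ∈ J, (f j x / F j) ^ (w j) := by
      intro x
      rw [← Finset.prod_mul_distrib]
      apply Finset.prod_congr rfl
      intro j hj
      rcases eq_or_ne (F j) 0 with h0 | h0
      · have hwj := hex j hj h0
        have hfx : f j x = 0 := by
          have := (Finset.sum_eq_zero_iff_of_nonneg (fun x _ => hf j hj x)).1 h0
          exact this x (Finset.mem_univ x)
        simp [h0, hfx, hwj, Real.rpow_zero]
      · rw [← Real.mul_rpow (hF0 j hj) (div_nonneg (hf j hj x) (hF0 j hj))]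
        rw [mul_div_cancel₀ _ h0]
    have hsum : ∑ x : γ, ∏ j ∈ J, (f j x / F j) ^ (w j) ≤ 1 := by
      calc ∑ x : γ, ∏ j ∈ J, (f j x / F j) ^ (w j)
          ≤ ∑ x : γ, ∑ j ∈ J, w j * (f j x / F j) := by
            apply Finset.sum_le_sum
            intro x _
            exact Real.geom_mean_le_arith_mean_weighted J w _ hw hw1
              (fun j hj => div_nonneg (hf j hj x) (hF0 j hj))
        _ = ∑ j ∈ J, w j * (F j / F j) := by
            rw [Finset.sum_comm]
            apply Finset.sum_congr rfl
            intro j hj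
            rw [← Finset.mul_sum, ← Finset.sum_div]
        _ ≤ ∑ j ∈ J, w j := by
            apply Finset.sum_le_sum
            intro j hj
            rcases eq_or_ne (F j) 0 with h0 | h0
            · simp [hex j hj h0]
            · rw [div_self h0, mul_one]
        _ = 1 := hw1
    calc ∑ x : γ, ∏ j ∈ J, (f j x) ^ (w j)
        = (∏ j ∈ J, (F j) ^ (w j)) * ∑ x : γ, ∏ j ∈ J, (f j x / F j) ^ (w j) := by
          rw [Finset.mul_sum]; exact Finset.sum_congr rfl fun x _ => key x
      _ ≤ (∏ j ∈ J, (F j) ^ (w j)) * 1 := by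
          apply mul_le_mul_of_nonneg_left hsum
          exact Finset.prod_nonneg fun j hj => Real.rpow_nonneg (hF0 j hj) _
      _ = ∏ j ∈ J, (F j) ^ (w j) := mul_one _


open scoped Classical in
/-- Finner's inequality, with "anchored" sums on the right-hand side. -/
lemma shearer_finner {ι : Type*} [Fintype ι] :
    ∀ (k : ℕ) (S : Fin k → Type u) [∀ i, Fintype (S i)] (g : ∀ i, S i)
      (A : ι → Finset (Fin k)) (f : ι → (∀ i, S i) → ℝ),
      (∀ j u, 0 ≤ f j u) →
      (∀ j u v, (∀ i ∈ A j, u i = v i) → f j u = f j v) →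
      ∀ (w : ι → ℝ), (∀ j, 0 ≤ w j) →
      (∀ i, ∑ j ∈ Finset.univ.filter (fun j => i ∈ A j), w j = 1) →
      ∑ u : (∀ i, S i), ∏ j : ι, (f j u) ^ (w j) ≤
        ∏ j : ι, (∑ u : (∀ i, S i), f j u *
          ∏ i : Fin k, (if i ∈ A j then (1:ℝ) else if u i = g i then 1 else 0)) ^ (w j) := by
  intro k
  induction k with
  | zero =>
    intro S _ g A f hf0 hdep w hw0 hcov
    apply le_of_eq
    have h1 : ∀ (j : ι), (∑ u : (∀ i : Fin 0, S i), f j u *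
        ∏ i : Fin 0, (if i ∈ A j then (1:ℝ) else if u i = g i then 1 else 0))
        = f j default := by
      intro j
      rw [Fintype.sum_unique]
      simp
    rw [Fintype.sum_unique]
    exact Finset.prod_congr rfl fun j _ => by rw [h1 j]
  | succ k IH =>
    intro S _ g A f hf0 hdep w hw0 hcov
    set S' : Fin k → Type u := fun i => S i.succ with hS'
    set g' : ∀ i, S' i := fun i => g i.succ with hg'
    set A' : ι → Finset (Fin k) := fun j => Finset.univ.filter (fun i => i.succ ∈ A j) with hA'
    set F : ι → (∀ i, S' i) → ℝ := fun j v =>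
      if 0 ∈ A j then ∑ s : S 0, f j (Fin.cons s v) else f j (Fin.cons (g 0) v) with hFdef
    have hmemA' : ∀ j (i : Fin k), i ∈ A' j ↔ i.succ ∈ A j := by
      intro j i; simp [hA']
    have hF0 : ∀ j v, 0 ≤ F j v := by
      intro j v
      by_cases h : 0 ∈ A j
      · simp only [hFdef, if_pos h]; exact Finset.sum_nonneg fun s _ => hf0 j _
      · simp only [hFdef, if_neg h]; exact hf0 j _
    have hconsdep : ∀ j (s s' : S 0) (v v' : ∀ i, S' i), (0 ∈ A j → s = s') →
        (∀ i ∈ A' j, v i = v' i) → f j (Fin.cons s v) = f j (Fin.cons s' v') := by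
      intro j s s' v v' hs hv
      apply hdep
      intro i
      refine Fin.cases ?_ ?_ i
      · intro h0; simp only [Fin.cons_zero]; exact hs h0
      · intro i' hi'; simp only [Fin.cons_succ]; exact hv i' ((hmemA' j i').2 hi')
    have hdep' : ∀ j v v', (∀ i ∈ A' j, v i = v' i) → F j v = F j v' := by
      intro j v v' hv
      by_cases h : 0 ∈ A j
      · simp only [hFdef, if_pos h]
        exact Finset.sum_congr rfl fun s _ => hconsdep j s s v v' (fun _ => rfl) hv
      · simp only [hFdef, if_neg h]
        exact hconsdep j (g 0) (g 0) v v' (fun _ => rfl) hv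
    have hcov' : ∀ i : Fin k, ∑ j ∈ Finset.univ.filter (fun j => i ∈ A' j), w j = 1 := by
      intro i
      rw [← hcov i.succ]
      apply Finset.sum_congr _ (fun _ _ => rfl)
      ext j
      simp [hA']
    have hsplit : ∀ (G : (∀ i, S i) → ℝ), ∑ u : (∀ i, S i), G u
        = ∑ v : (∀ i, S' i), ∑ s : S 0, G (Fin.cons s v) := by
      intro G
      rw [← Equiv.sum_comp (Fin.consEquiv S) G, Fintype.sum_prod_type, Finset.sum_comm]
      rfl
    -- pointwise Hölder step
    have hstep : ∀ v : (∀ i, S' i), ∑ s : S 0, ∏ j : ι, (f j (Fin.cons s v)) ^ (w j)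
        ≤ ∏ j : ι, (F j v) ^ (w j) := by
      intro v
      have hpf : ∀ s : S 0, ∏ j : ι, (f j (Fin.cons s v)) ^ (w j)
          = (∏ j ∈ Finset.univ.filter (fun j => 0 ∈ A j), (f j (Fin.cons s v)) ^ (w j)) *
            ∏ j ∈ Finset.univ.filter (fun j => ¬ 0 ∈ A j), (F j v) ^ (w j) := by
        intro s
        rw [← Finset.prod_filter_mul_prod_filter_not Finset.univ (fun j => 0 ∈ A j)]
        congr 1
        apply Finset.prod_congr rfl
        intro j hj
        rw [Finset.mem_filter] at hj
        have : f j (Fin.cons s v) = F j v := by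
          rw [hFdef]
          simp only [if_neg hj.2]
          exact hconsdep j s (g 0) v v (fun h0 => absurd h0 hj.2) (fun _ _ => rfl)
        rw [this]
      have hC0 : 0 ≤ ∏ j ∈ Finset.univ.filter (fun j => ¬ 0 ∈ A j), (F j v) ^ (w j) :=
        Finset.prod_nonneg fun j _ => Real.rpow_nonneg (hF0 j v) _
      calc ∑ s : S 0, ∏ j : ι, (f j (Fin.cons s v)) ^ (w j)
          = (∑ s : S 0, ∏ j ∈ Finset.univ.filter (fun j => 0 ∈ A j),
              (f j (Fin.cons s v)) ^ (w j)) *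
            ∏ j ∈ Finset.univ.filter (fun j => ¬ 0 ∈ A j), (F j v) ^ (w j) := by
            rw [Finset.sum_mul]
            exact Finset.sum_congr rfl fun s _ => hpf s
        _ ≤ (∏ j ∈ Finset.univ.filter (fun j => 0 ∈ A j),
              (∑ s : S 0, f j (Fin.cons s v)) ^ (w j)) *
            ∏ j ∈ Finset.univ.filter (fun j => ¬ 0 ∈ A j), (F j v) ^ (w j) := by
            apply mul_le_mul_of_nonneg_right _ hC0
            exact shearer_holder _ w (fun j s => f j (Fin.cons s v))
              (fun j _ => hw0 j) (hcov 0) (fun j _ s => hf0 j _)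
        _ = (∏ j ∈ Finset.univ.filter (fun j => 0 ∈ A j), (F j v) ^ (w j)) *
            ∏ j ∈ Finset.univ.filter (fun j => ¬ 0 ∈ A j), (F j v) ^ (w j) := by
            congr 1
            apply Finset.prod_congr rfl
            intro j hj
            rw [Finset.mem_filter] at hj
            rw [hFdef]
            simp only [if_pos hj.2]
        _ = ∏ j : ι, (F j v) ^ (w j) :=
            Finset.prod_filter_mul_prod_filter_not Finset.univ (fun j => 0 ∈ A j) _
    -- matching of the anchored sums
    have hanch : ∀ j : ι,
        (∑ v : (∀ i, S' i), F j v *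
          ∏ i : Fin k, (if i ∈ A' j then (1:ℝ) else if v i = g' i then 1 else 0))
        = ∑ u : (∀ i, S i), f j u *
          ∏ i : Fin (k+1), (if i ∈ A j then (1:ℝ) else if u i = g i then 1 else 0) := by
      intro j
      rw [hsplit]
      apply Finset.sum_congr rfl
      intro v _
      have hW : ∀ s : S 0, (∏ i : Fin (k+1),
          (if i ∈ A j then (1:ℝ) else if (Fin.cons s v : ∀ i, S i) i = g i then 1 else 0))
          = (if 0 ∈ A j then (1:ℝ) else if s = g 0 then 1 else 0) *
            ∏ i : Fin k, (if i ∈ A' j then (1:ℝ) else if v i = g' i then 1 else 0) := by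
        intro s
        rw [Fin.prod_univ_succ]
        simp only [Fin.cons_zero, Fin.cons_succ]
        congr 1
        apply Finset.prod_congr rfl
        intro i _
        rw [if_congr (Iff.symm (hmemA' j i)) rfl rfl]
      by_cases h : 0 ∈ A j
      · simp only [hW, if_pos h, one_mul, hFdef]
        rw [Finset.sum_mul]
      · simp only [hW, if_neg h, hFdef]
        have hpt : ∀ s : S 0, f j (Fin.cons s v) * ((if s = g 0 then (1:ℝ) else 0) *
            ∏ i : Fin k, (if i ∈ A' j then (1:ℝ) else if v i = g' i then 1 else 0))
            = if s = g 0 then f j (Fin.cons s v) *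
                ∏ i : Fin k, (if i ∈ A' j then (1:ℝ) else if v i = g' i then 1 else 0) else 0 := by
          intro s; by_cases hs : s = g 0 <;> simp [hs]
        rw [Finset.sum_congr rfl fun s _ => hpt s, Finset.sum_ite_eq' Finset.univ (g 0)]
        simp
    calc ∑ u : (∀ i, S i), ∏ j : ι, (f j u) ^ (w j)
        = ∑ v : (∀ i, S' i), ∑ s : S 0, ∏ j : ι, (f j (Fin.cons s v)) ^ (w j) :=
          hsplit _
      _ ≤ ∑ v : (∀ i, S' i), ∏ j : ι, (F j v) ^ (w j) :=
          Finset.sum_le_sum fun v _ => hstep v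
      _ ≤ ∏ j : ι, (∑ v : (∀ i, S' i), F j v *
            ∏ i : Fin k, (if i ∈ A' j then (1:ℝ) else if v i = g' i then 1 else 0)) ^ (w j) :=
          IH S' g' A' F hF0 hdep' w hw0 hcov'
      _ = ∏ j : ι, (∑ u : (∀ i, S i), f j u *
            ∏ i : Fin (k+1), (if i ∈ A j then (1:ℝ) else if u i = g i then 1 else 0)) ^ (w j) :=
          Finset.prod_congr rfl fun j _ => by rw [hanch j]


/-- Gibbs' inequality / nonnegativity of KL divergence. -/
lemma shearer_kl {γ : Type*} [Fintype γ] (P q : γ → ℝ) (hP0 : ∀ u, 0 ≤ P u)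
    (hq0 : ∀ u, 0 ≤ q u) (hP1 : ∑ u : γ, P u = 1) (hq1 : ∑ u : γ, q u ≤ 1)
    (hsupp : ∀ u, q u = 0 → P u = 0) :
    ∑ u : γ, P u * Real.logb 2 (q u) ≤ ∑ u : γ, P u * Real.logb 2 (P u) := by
  have hlog2 : (0:ℝ) < Real.log 2 := Real.log_pos (by norm_num)
  have key : ∀ u : γ, P u * Real.logb 2 (q u) - P u * Real.logb 2 (P u)
      ≤ (q u - P u) / Real.log 2 := by
    intro u
    rcases eq_or_lt_of_le (hP0 u) with h0 | hpos
    · rw [← h0]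
      simp only [zero_mul, sub_self, sub_zero]
      exact div_nonneg (hq0 u) (le_of_lt hlog2)
    · have hqpos : 0 < q u := by
        rcases eq_or_lt_of_le (hq0 u) with h | h
        · exact absurd (hsupp u h.symm) (ne_of_gt hpos)
        · exact h
      rw [← mul_sub]
      have : Real.logb 2 (q u) - Real.logb 2 (P u) = Real.log (q u / P u) / Real.log 2 := by
        rw [Real.log_div (ne_of_gt hqpos) (ne_of_gt hpos)]
        simp [Real.logb, sub_div]
      rw [this]
      have hle : Real.log (q u / P u) ≤ q u / P u - 1 :=
        Real.log_le_sub_one_of_pos (div_pos hqpos hpos)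
      calc P u * (Real.log (q u / P u) / Real.log 2)
          ≤ P u * ((q u / P u - 1) / Real.log 2) := by
            apply mul_le_mul_of_nonneg_left _ (le_of_lt hpos)
            exact div_le_div_of_nonneg_right hle hlog2.le
        _ = (q u - P u) / Real.log 2 := by
            field_simp
  have := Finset.sum_le_sum (fun u (_ : u ∈ Finset.univ) => key u)
  rw [Finset.sum_sub_distrib] at this
  have h2 : ∑ u : γ, (q u - P u) / Real.log 2 = ((∑ u : γ, q u) - 1) / Real.log 2 := by
    rw [← Finset.sum_div, Finset.sum_sub_distrib, hP1]
  rw [h2] at this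
  have h3 : ((∑ u : γ, q u) - 1) / Real.log 2 ≤ 0 := by
    apply div_nonpos_of_nonpos_of_nonneg _ (le_of_lt hlog2)
    linarith
  linarith

open scoped Classical in
/-- Summing an `A`-local function against the anchor weight gives the plain marginal sum. -/
lemma shearer_sumW {k : ℕ} (S : Fin k → Type*) [∀ i, Fintype (S i)] (g : ∀ i, S i)
    (A : Finset (Fin k)) (h : (∀ i : A, S i.1) → ℝ) :
    ∑ u : (∀ i, S i), h (fun i => u i.1) *
      ∏ i : Fin k, (if i ∈ A then (1:ℝ) else if u i = g i then 1 else 0)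
      = ∑ t : (∀ i : A, S i.1), h t := by
  classical
  set e := Equiv.piEquivPiSubtypeProd (fun i => i ∈ A) S with he
  rw [← Equiv.sum_comp e.symm, Fintype.sum_prod_type]
  have key : ∀ (a : ∀ i : {x // x ∈ A}, S i) (b : ∀ i : {x // ¬ x ∈ A}, S i),
      (h (fun i => e.symm (a, b) i.1)) = h a ∧
      (∏ i : Fin k, (if i ∈ A then (1:ℝ) else if e.symm (a, b) i = g i then 1 else 0))
        = ∏ i : {x // ¬ x ∈ A}, (if b i = g i.1 then (1:ℝ) else 0) := by
    intro a b
    constructor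
    · congr 1
      funext i
      simp [he, Equiv.piEquivPiSubtypeProd, i.2]
    · rw [← Finset.prod_filter_mul_prod_filter_not Finset.univ (fun i => i ∈ A)]
      rw [Finset.prod_eq_one (fun i hi => by rw [Finset.mem_filter] at hi; rw [if_pos hi.2]),
        one_mul]
      rw [Finset.prod_subtype (Finset.univ.filter (fun i => ¬ i ∈ A))
        (p := fun i => ¬ i ∈ A) (by simp)]
      apply Finset.prod_congr rfl
      intro i _
      rw [if_neg i.2]
      congr 1
      simp [he, Equiv.piEquivPiSubtypeProd, i.2]
  calc ∑ a : (∀ i : {x // x ∈ A}, S i.1), ∑ b : (∀ i : {x // ¬ x ∈ A}, S i.1),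
        h (fun i => e.symm (a, b) i.1) *
        ∏ i : Fin k, (if i ∈ A then (1:ℝ) else if e.symm (a, b) i = g i then 1 else 0)
      = ∑ a : (∀ i : {x // x ∈ A}, S i.1), ∑ b : (∀ i : {x // ¬ x ∈ A}, S i.1),
          h a * ∏ i : {x // ¬ x ∈ A}, (if b i = g i.1 then (1:ℝ) else 0) := by
        apply Finset.sum_congr rfl; intro a _
        apply Finset.sum_congr rfl; intro b _
        rw [(key a b).1, (key a b).2]
    _ = ∑ a : (∀ i : {x // x ∈ A}, S i.1), h a := by
        apply Finset.sum_congr rfl; intro a _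
        rw [← Finset.mul_sum]
        have hb : ∀ b : (∀ i : {x // ¬ x ∈ A}, S i.1),
            (∏ i : {x // ¬ x ∈ A}, if b i = g i.1 then (1:ℝ) else 0)
            = if b = (fun i : {x // ¬ x ∈ A} => g i.1) then 1 else 0 := by
          intro b
          by_cases hbg : b = fun i : {x // ¬ x ∈ A} => g i.1
          · subst hbg; simp
          · rw [if_neg hbg]
            obtain ⟨i, hi⟩ : ∃ i, b i ≠ g i.1 := by
              by_contra hc; push_neg at hc; exact hbg (funext hc)
            exact Finset.prod_eq_zero (Finset.mem_univ i) (by rw [if_neg hi])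
        rw [Finset.sum_congr rfl fun b _ => hb b,
          Finset.sum_ite_eq' Finset.univ (fun i : {x // ¬ x ∈ A} => g i.1)]
        simp

end ShearerAux

section helpers
variable {Ω : Type*} [Fintype Ω]

lemma shearer_pr_nonneg {T : Type*} (p : Ω → ℝ) (hp0 : ∀ ω, 0 ≤ p ω) (X : Ω → T) (t : T) :
    0 ≤ pr p X t := by
  unfold pr
  apply Finset.sum_nonneg
  intro ω _
  split
  · exact hp0 ω
  · exact le_refl 0

open scoped Classical in
lemma shearer_pr_pull {T : Type*} [Fintype T] (p : Ω → ℝ) (Y : Ω → T) (h : T → ℝ) :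
    ∑ t : T, pr p Y t * h t = ∑ ω : Ω, p ω * h (Y ω) := by
  unfold pr
  simp only [Finset.sum_mul, ite_mul, zero_mul]
  rw [Finset.sum_comm]
  apply Finset.sum_congr rfl
  intro ω _
  rw [Finset.sum_ite_eq Finset.univ (Y ω) (fun t => p ω * h t)]
  simp

lemma shearer_pr_sum {T : Type*} [Fintype T] (p : Ω → ℝ) (Y : Ω → T) :
    ∑ t : T, pr p Y t = ∑ ω : Ω, p ω := by
  have := shearer_pr_pull p Y (fun _ => 1)
  simpa using this

end helpers

/-- Shearer's lemma: if `α : 2^[k] → [0,∞)` satisfies `∑_{A ∋ i} α_A = 1` for every `i`,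
then `H(X) ≤ ∑_A α_A H(X_A)`. -/
theorem shearer {Ω : Type*} [Fintype Ω] (k : ℕ) (S : Fin k → Type*) [∀ i, Fintype (S i)]
    (p : Ω → ℝ) (hp0 : ∀ ω, 0 ≤ p ω) (hp1 : ∑ ω : Ω, p ω = 1)
    (X : ∀ i : Fin k, Ω → S i)
    (α : Finset (Fin k) → ℝ) (hα0 : ∀ A, 0 ≤ α A)
    (hα1 : ∀ i : Fin k, ∑ A ∈ Finset.univ.filter (fun A : Finset (Fin k) => i ∈ A), α A = 1) :
    ent p (fun ω => (fun i : Fin k => X i ω)) ≤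
      ∑ A : Finset (Fin k), α A * ent p (fun ω => (fun i : A => X i.1 ω)) := by
  classical
  have hΩ : Nonempty Ω := by
    by_contra h
    rw [not_nonempty_iff] at h
    rw [Finset.univ_eq_empty, Finset.sum_empty] at hp1
    exact one_ne_zero hp1.symm
  obtain ⟨ω0⟩ := hΩ
  set g : ∀ i, S i := fun i => X i ω0 with hgdef
  set Xf : Ω → (∀ i, S i) := fun ω i => X i ω with hXfdef
  set P : (∀ i, S i) → ℝ := pr p Xf with hPdef
  set marg : ∀ A : Finset (Fin k), (∀ i : A, S i.1) → ℝ :=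
    fun A => pr p (fun ω => (fun i : A => X i.1 ω)) with hmargdef
  set mf : Finset (Fin k) → (∀ i, S i) → ℝ :=
    fun A u => marg A (fun i => u i.1) with hmfdef
  set q : (∀ i, S i) → ℝ := fun u => ∏ A : Finset (Fin k), (mf A u) ^ (α A) with hqdef
  have hP0 : ∀ u, 0 ≤ P u := fun u => shearer_pr_nonneg p hp0 Xf u
  have hm0 : ∀ A u, 0 ≤ mf A u := fun A u => shearer_pr_nonneg p hp0 _ _
  have hP1 : ∑ u : (∀ i, S i), P u = 1 := by rw [hPdef, shearer_pr_sum p Xf, hp1]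
  have hPle : ∀ A u, P u ≤ mf A u := by
    intro A u
    have hPu : P u = pr p Xf u := rfl
    have hmu : mf A u = pr p (fun ω => (fun i : A => X i.1 ω)) (fun i : A => u i.1) := rfl
    rw [hPu, hmu]
    unfold pr
    apply Finset.sum_le_sum
    intro ω _
    by_cases hωu : Xf ω = u
    · have hcond : (fun i : A => X i.1 ω) = (fun i : A => u i.1) :=
        funext fun i => congrFun hωu i.1
      rw [if_pos hωu, if_pos hcond]
    · rw [if_neg hωu]
      split
      · exact hp0 ω
      · exact le_refl 0
  have hdep : ∀ A u v, (∀ i ∈ A, u i = v i) → mf A u = mf A v := fun A u v huv =>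
    congrArg (marg A) (funext fun i => huv i.1 i.2)
  have hmargsum : ∀ A : Finset (Fin k), ∑ t : (∀ i : A, S i.1), marg A t = 1 := by
    intro A
    rw [hmargdef, shearer_pr_sum, hp1]
  have hanch : ∀ A : Finset (Fin k), (∑ u : (∀ i, S i), mf A u *
      ∏ i : Fin k, (if i ∈ A then (1:ℝ) else if u i = g i then 1 else 0)) = 1 := by
    intro A
    have h1 : (∑ u : (∀ i, S i), mf A u *
        ∏ i : Fin k, (if i ∈ A then (1:ℝ) else if u i = g i then 1 else 0))
        = ∑ t : (∀ i : A, S i.1), marg A t := shearer_sumW S g A (marg A)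
    rw [h1, hmargsum A]
  have hq1 : ∑ u : (∀ i, S i), q u ≤ 1 := by
    calc ∑ u : (∀ i, S i), q u
        ≤ ∏ A : Finset (Fin k), (∑ u : (∀ i, S i), mf A u *
            ∏ i : Fin k, (if i ∈ A then (1:ℝ) else if u i = g i then 1 else 0)) ^ (α A) :=
          shearer_finner k S g (fun A => A) mf hm0 hdep α hα0 hα1
      _ = ∏ A : Finset (Fin k), (1:ℝ) ^ (α A) :=
          Finset.prod_congr rfl fun A _ => by rw [hanch A]
      _ = 1 := by simp
  have hq0 : ∀ u, 0 ≤ q u := fun u =>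
    Finset.prod_nonneg fun A _ => Real.rpow_nonneg (hm0 A u) _
  have hsupp : ∀ u, q u = 0 → P u = 0 := by
    intro u hqu
    rw [hqdef] at hqu
    obtain ⟨A, -, hA⟩ := Finset.prod_eq_zero_iff.1 hqu
    have hmfA : mf A u = 0 := by
      by_contra hne
      have hpos : 0 < mf A u := lt_of_le_of_ne (hm0 A u) (Ne.symm hne)
      exact absurd hA (ne_of_gt (Real.rpow_pos_of_pos hpos _))
    exact le_antisymm (hmfA ▸ hPle A u) (hP0 u)
  have hentA : ∀ A : Finset (Fin k), ent p (fun ω => (fun i : A => X i.1 ω))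
      = ∑ u : (∀ i, S i), P u * Real.logb 2 (mf A u)⁻¹ := by
    intro A
    have e1 : ent p (fun ω => (fun i : A => X i.1 ω))
        = ∑ t : (∀ i : A, S i.1), marg A t * Real.logb 2 (marg A t)⁻¹ := rfl
    have e2 : ∑ t : (∀ i : A, S i.1), marg A t * Real.logb 2 (marg A t)⁻¹
        = ∑ ω : Ω, p ω * Real.logb 2 (marg A (fun i : A => X i.1 ω))⁻¹ :=
      shearer_pr_pull p (fun ω => (fun i : A => X i.1 ω))
        (fun t => Real.logb 2 (marg A t)⁻¹)
    have e3 : ∑ u : (∀ i, S i), P u * Real.logb 2 (mf A u)⁻¹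
        = ∑ ω : Ω, p ω * Real.logb 2 (mf A (Xf ω))⁻¹ :=
      shearer_pr_pull p Xf (fun u => Real.logb 2 (mf A u)⁻¹)
    rw [e1, e2, e3]
  have hswap : ∑ A : Finset (Fin k), α A * ∑ u : (∀ i, S i), P u * Real.logb 2 (mf A u)⁻¹
      = ∑ u : (∀ i, S i), P u * ∑ A : Finset (Fin k), α A * Real.logb 2 (mf A u)⁻¹ := by
    simp only [Finset.mul_sum]
    rw [Finset.sum_comm]
    apply Finset.sum_congr rfl
    intro u _
    apply Finset.sum_congr rfl
    intro A _
    ring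
  have hpoint : ∀ u, P u * ∑ A : Finset (Fin k), α A * Real.logb 2 (mf A u)⁻¹
      = P u * Real.logb 2 (q u)⁻¹ := by
    intro u
    by_cases hPu : P u = 0
    · rw [hPu, zero_mul, zero_mul]
    · have hPpos : 0 < P u := lt_of_le_of_ne (hP0 u) (Ne.symm hPu)
      have hmpos : ∀ A : Finset (Fin k), 0 < mf A u := fun A =>
        lt_of_lt_of_le hPpos (hPle A u)
      congr 1
      have hlogq : Real.logb 2 (q u) = ∑ A : Finset (Fin k), α A * Real.logb 2 (mf A u) := by
        simp only [hqdef]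
        unfold Real.logb
        rw [Real.log_prod (fun A _ => ne_of_gt (Real.rpow_pos_of_pos (hmpos A) _))]
        rw [Finset.sum_div]
        apply Finset.sum_congr rfl
        intro A _
        rw [Real.log_rpow (hmpos A)]
        ring
      rw [Real.logb_inv, hlogq, ← Finset.sum_neg_distrib]
      apply Finset.sum_congr rfl
      intro A _
      rw [Real.logb_inv]
      ring
  have hkl := shearer_kl P q hP0 hq0 hP1 hq1 hsupp
  have l1 : ∑ u : (∀ i, S i), P u * Real.logb 2 (P u)⁻¹
      = - ∑ u : (∀ i, S i), P u * Real.logb 2 (P u) := by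
    rw [← Finset.sum_neg_distrib]
    exact Finset.sum_congr rfl fun u _ => by rw [Real.logb_inv]; ring
  have l2 : ∑ u : (∀ i, S i), P u * Real.logb 2 (q u)⁻¹
      = - ∑ u : (∀ i, S i), P u * Real.logb 2 (q u) := by
    rw [← Finset.sum_neg_distrib]
    exact Finset.sum_congr rfl fun u _ => by rw [Real.logb_inv]; ring
  calc ent p (fun ω => (fun i : Fin k => X i ω))
      = ∑ u : (∀ i, S i), P u * Real.logb 2 (P u)⁻¹ := rfl
    _ = - ∑ u : (∀ i, S i), P u * Real.logb 2 (P u) := l1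
    _ ≤ - ∑ u : (∀ i, S i), P u * Real.logb 2 (q u) := neg_le_neg hkl
    _ = ∑ u : (∀ i, S i), P u * Real.logb 2 (q u)⁻¹ := l2.symm
    _ = ∑ u : (∀ i, S i), P u * ∑ A : Finset (Fin k), α A * Real.logb 2 (mf A u)⁻¹ :=
        Finset.sum_congr rfl fun u _ => (hpoint u).symm
    _ = ∑ A : Finset (Fin k), α A * ∑ u : (∀ i, S i), P u * Real.logb 2 (mf A u)⁻¹ :=
        hswap.symm
    _ = ∑ A : Finset (Fin k), α A * ent p (fun ω => (fun i : A => X i.1 ω)) :=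
        Finset.sum_congr rfl fun A _ => by rw [hentA A]
end

section
/- Let d ≥ 1, let u be an odd vertex of Q_d with neighborhood N_u ⊆ E, and let X ∪ Y be a partition of N_u with X ≠ ∅ and Y ≠ ∅. Let μ be a probability distribution on proper 4-colorings f of Q_d such that μ-almost surely f(x) ∈ {1,2} for all x ∈ X and f(y) ∈ {3,4} for all y ∈ Y. Then T_μ(u) := (1/d)·H(f_{N_u}) + H(f_u | f(N_u)) ≤ 1 + 4/d, where f is random with distribution μ. -/
open Finset

instance cubeAdjDecidable (d : ℕ) : DecidableRel (cube d).Adj := fun u v =>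
  decidable_of_iff ((Finset.univ.filter fun i => u i ≠ v i).card = 1) Iff.rfl

/-- `f` is a proper `q`-coloring of the `d`-dimensional hypercube. -/
def IsColoring (d q : ℕ) (f : V d → Fin q) : Prop :=
  ∀ u v : V d, (cube d).Adj u v → f u ≠ f v

/-- The conditional entropy
`H(X | Y) = ∑_u P(Y = u) ∑_t P(X = t | Y = u) log₂ (1 / P(X = t | Y = u))`. -/
noncomputable def condEnt {Ω T U : Type*} [Fintype Ω] [Fintype T] [Fintype U]
    (p : Ω → ℝ) (X : Ω → T) (Y : Ω → U) : ℝ :=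
  ∑ u : U, pr p Y u *
    ∑ t : T, (pr p (fun ω => (X ω, Y ω)) (t, u) / pr p Y u) *
      Real.logb 2 ((pr p (fun ω => (X ω, Y ω)) (t, u) / pr p Y u))⁻¹

/-- `T_p(u) = (1/d) H(f_{N_u}) + H(f_u | f(N_u))`, where `f` is a random coloring with
distribution `p`, `f_{N_u}` is the restriction of `f` to the neighborhood of `u`, and
`f(N_u)` is the set of colors appearing on the neighborhood of `u`. -/
noncomputable def Tp (d : ℕ) (p : (V d → Fin 4) → ℝ) (u : V d) : ℝ :=
  (1 / (d : ℝ)) * ent p (fun f => fun v : {v : V d // (cube d).Adj u v} => f v.1) +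
    condEnt p (fun f => f u)
      (fun f => Finset.image (fun v : {v : V d // (cube d).Adj u v} => f v.1) Finset.univ)

/-! ### Auxiliary lemmas -/

private lemma concaveOn_logb2 : ConcaveOn ℝ (Set.Ioi 0) (Real.logb 2) := by
  have h : Real.logb 2 = fun x => (Real.log 2)⁻¹ • Real.log x := by
    funext x; simp [Real.logb, div_eq_inv_mul]
  rw [h]
  exact (strictConcaveOn_log_Ioi.concaveOn).smul (by positivity)

private lemma entropy_sum_le {T : Type*} [DecidableEq T] (s : Finset T) (a : T → ℝ)
    (ha : ∀ t ∈ s, 0 ≤ a t) (n : ℕ) (hn : s.card ≤ n) :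
    ∑ t ∈ s, a t * Real.logb 2 (a t)⁻¹ ≤
      (∑ t ∈ s, a t) * (Real.logb 2 n + Real.logb 2 (∑ t ∈ s, a t)⁻¹) := by
  classical
  set s' := s.filter fun t => a t ≠ 0 with hs'
  have hL : ∑ t ∈ s', a t * Real.logb 2 (a t)⁻¹ = ∑ t ∈ s, a t * Real.logb 2 (a t)⁻¹ :=
    Finset.sum_filter_of_ne (by
      intro t ht h h0
      exact h (by rw [h0, zero_mul]))
  have hQ : ∑ t ∈ s', a t = ∑ t ∈ s, a t :=
    Finset.sum_filter_of_ne (by intro t ht h; exact h)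
  rcases s'.eq_empty_or_nonempty with he | hne
  · have h0 : ∀ t ∈ s, a t = 0 := by
      intro t ht
      by_contra h
      exact Finset.notMem_empty t (he ▸ Finset.mem_filter.2 ⟨ht, h⟩)
    rw [Finset.sum_eq_zero (fun t ht => by rw [h0 t ht, zero_mul]), Finset.sum_eq_zero h0]
    simp
  · have hpos : ∀ t ∈ s', 0 < a t := fun t ht =>
      lt_of_le_of_ne (ha t (Finset.mem_filter.1 ht).1) (Ne.symm (Finset.mem_filter.1 ht).2)
    set Q := ∑ t ∈ s, a t with hQdef
    have hQpos : 0 < Q := by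
      rw [← hQ]; exact Finset.sum_pos hpos hne
    have hw1 : ∑ t ∈ s', a t / Q = 1 := by
      rw [← Finset.sum_div, hQ]; field_simp
    have hj := concaveOn_logb2.le_map_sum (t := s') (w := fun t => a t / Q)
      (p := fun t => (a t)⁻¹)
      (fun t ht => div_nonneg (hpos t ht).le hQpos.le)
      hw1
      (fun t ht => Set.mem_Ioi.2 (by have := hpos t ht; positivity))
    have hx : ∑ t ∈ s', (a t / Q) • (a t)⁻¹ = (s'.card : ℝ) / Q := by
      have : ∀ t ∈ s', (a t / Q) • (a t)⁻¹ = 1 / Q := by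
        intro t ht
        have h1 := hpos t ht
        rw [smul_eq_mul]
        field_simp
      rw [Finset.sum_congr rfl this, Finset.sum_const, nsmul_eq_mul]
      ring
    simp only [smul_eq_mul] at hx hj
    rw [hx] at hj
    have hcard1 : 1 ≤ s'.card := Finset.card_pos.2 hne
    have hcards : (s'.card : ℝ) > 0 := by exact_mod_cast hcard1
    have hlog : Real.logb 2 ((s'.card : ℝ) / Q) ≤ Real.logb 2 n + Real.logb 2 Q⁻¹ := by
      rw [div_eq_mul_inv, Real.logb_mul (by positivity) (by positivity)]
      have : Real.logb 2 (s'.card : ℝ) ≤ Real.logb 2 (n : ℝ) :=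
        Real.logb_le_logb_of_le (by norm_num) hcards (by
          exact_mod_cast le_trans (Finset.card_filter_le _ _) hn)
      linarith
    have hmain : ∑ t ∈ s', a t * Real.logb 2 (a t)⁻¹ ≤ Q * (Real.logb 2 n + Real.logb 2 Q⁻¹) := by
      have h2 : ∑ t ∈ s', a t * Real.logb 2 (a t)⁻¹
          = Q * ∑ t ∈ s', (a t / Q) * Real.logb 2 (a t)⁻¹ := by
        rw [Finset.mul_sum]
        refine Finset.sum_congr rfl fun t ht => ?_
        have hQ0 : Q ≠ 0 := ne_of_gt hQpos
        field_simp
      rw [h2]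
      calc Q * ∑ t ∈ s', (a t / Q) * Real.logb 2 (a t)⁻¹
          ≤ Q * Real.logb 2 ((s'.card : ℝ) / Q) :=
            mul_le_mul_of_nonneg_left hj (le_of_lt hQpos)
        _ ≤ Q * (Real.logb 2 n + Real.logb 2 Q⁻¹) :=
            mul_le_mul_of_nonneg_left hlog (le_of_lt hQpos)
    rw [hL] at hmain
    exact hmain

section PrLemmas
variable {Ω : Type*} [Fintype Ω] {p : Ω → ℝ}

private lemma pr_nonneg (hp0 : ∀ ω, 0 ≤ p ω) {T : Type*} (X : Ω → T) (t : T) :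
    0 ≤ pr p X t := by
  unfold pr
  apply Finset.sum_nonneg
  intro ω _
  split_ifs
  exacts [hp0 ω, le_refl 0]

private lemma pr_sum_filter {T : Type*} [Fintype T] [DecidableEq T] (X : Ω → T) (s : Finset T) :
    ∑ t ∈ s, pr p X t = ∑ ω : Ω, if X ω ∈ s then p ω else 0 := by
  classical
  unfold pr
  rw [Finset.sum_comm]
  refine Finset.sum_congr rfl fun ω _ => ?_
  convert Finset.sum_ite_eq s (X ω) (fun _ => p ω) using 2
  exact ite_congr rfl (fun _ => rfl) (fun _ => rfl)

private lemma pr_total {T : Type*} [Fintype T] (X : Ω → T) :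
    ∑ t : T, pr p X t = ∑ ω : Ω, p ω := by
  classical
  rw [pr_sum_filter X Finset.univ]
  simp

private lemma exists_of_pr_ne_zero {T : Type*} (X : Ω → T) {t : T} (h : pr p X t ≠ 0) :
    ∃ ω, p ω ≠ 0 ∧ X ω = t := by
  classical
  by_contra hc
  push_neg at hc
  apply h
  unfold pr
  apply Finset.sum_eq_zero
  intro ω _
  split_ifs with h'
  · by_contra hp
    exact hc ω hp h'
  · rfl

private lemma pr_marginal {T U : Type*} [Fintype T] (X : Ω → T) (Y : Ω → U) (u : U) :
    ∑ t : T, pr p (fun ω => (X ω, Y ω)) (t, u) = pr p Y u := by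
  classical
  unfold pr
  rw [Finset.sum_comm]
  refine Finset.sum_congr rfl fun ω _ => ?_
  by_cases hY : Y ω = u
  · simp only [Prod.mk.injEq, hY, and_true]
    simp [Finset.sum_ite_eq Finset.univ (X ω) (fun _ => p ω)]
  · simp only [Prod.mk.injEq, hY, and_false, if_false]
    simp [hY]

end PrLemmas

private lemma logb4 : Real.logb 2 ((4:ℕ):ℝ) = 2 := by
  rw [show ((4:ℕ):ℝ) = (2:ℝ)^(2:ℕ) by norm_num, Real.logb_pow,
    Real.logb_self_eq_one (by norm_num)]
  norm_num

private lemma logb2d (d : ℕ) : Real.logb 2 ((2^d : ℕ):ℝ) = d := by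
  rw [show ((2^d:ℕ):ℝ) = (2:ℝ)^d by push_cast; ring, Real.logb_pow,
    Real.logb_self_eq_one (by norm_num)]
  norm_num

set_option maxHeartbeats 1000000 in
/-- If the neighborhood of an odd vertex `u` is partitioned into nonempty sets `X, Y`, and
`f` is a random proper 4-coloring which almost surely colors all of `X` with `{1,2}`
(good) and all of `Y` with `{3,4}` (bad), then
`T(u) = (1/d) H(f_{N_u}) + H(f_u | f(N_u)) ≤ 1 + 4/d`. -/
theorem T_le_one (d : ℕ) (hd : 1 ≤ d) (u : V d) (hu : ¬ isEven u)
    (X Y : Set (V d)) (hXY : X ∪ Y = (cube d).neighborSet u) (hdisj : Disjoint X Y)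
    (hX : X.Nonempty) (hY : Y.Nonempty)
    (p : (V d → Fin 4) → ℝ) (hp0 : ∀ f, 0 ≤ p f) (hp1 : ∑ f : V d → Fin 4, p f = 1)
    (hcol : ∀ f, p f ≠ 0 → IsColoring d 4 f)
    (hgood : ∀ f, p f ≠ 0 → ∀ x ∈ X, f x ∈ ({0, 1} : Finset (Fin 4)))
    (hbad : ∀ f, p f ≠ 0 → ∀ y ∈ Y, f y ∈ ({2, 3} : Finset (Fin 4))) :
    Tp d p u ≤ 1 + 4 / (d : ℝ) := by
  classical
  have hd0 : (0:ℝ) < d := by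
    have : 0 < d := hd
    exact_mod_cast this
  obtain ⟨x₀, hx₀X⟩ := hX
  obtain ⟨y₀, hy₀Y⟩ := hY
  have hx₀adj : (cube d).Adj u x₀ := by
    have h : x₀ ∈ X ∪ Y := Or.inl hx₀X
    rw [hXY] at h; exact h
  have hy₀adj : (cube d).Adj u y₀ := by
    have h : y₀ ∈ X ∪ Y := Or.inr hy₀Y
    rw [hXY] at h; exact h
  have hmemXY : ∀ v : {v : V d // (cube d).Adj u v}, v.1 ∈ X ∨ v.1 ∈ Y := by
    intro v
    have h : v.1 ∈ X ∪ Y := by rw [hXY]; exact v.2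
    exact h
  have hclass : ∀ a b : Fin 4, a ∈ ({0,1} : Finset (Fin 4)) →
      b ∈ ({2,3} : Finset (Fin 4)) → a ≠ b := by decide
  -- the neighborhood has cardinality d
  have hcard : Fintype.card {v : V d // (cube d).Adj u v} = d := by
    have himage : (Finset.univ.filter fun v => (cube d).Adj u v) =
        Finset.univ.image (fun i : Fin d => fun j => if j = i then !u j else u j) := by
      ext v
      simp only [Finset.mem_filter, Finset.mem_univ, true_and, Finset.mem_image]
      constructor
      · intro hv
        have hv' : (Finset.univ.filter fun k => u k ≠ v k).card = 1 := hv
        obtain ⟨i, hi⟩ := Finset.card_eq_one.1 hv'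
        refine ⟨i, ?_⟩
        funext j
        by_cases hj : j = i
        · subst hj
          have hji : j ∈ Finset.univ.filter fun k => u k ≠ v k := by
            rw [hi]; exact Finset.mem_singleton_self _
          have : u j ≠ v j := (Finset.mem_filter.1 hji).2
          simp only [if_pos rfl]
          revert this; cases u j <;> cases v j <;> simp
        · have hji : j ∉ Finset.univ.filter fun k => u k ≠ v k := by
            rw [hi]; simp [hj]
          have : ¬ (u j ≠ v j) := fun h => hji (Finset.mem_filter.2 ⟨Finset.mem_univ _, h⟩)
          push_neg at this
          simp [hj, this]
      · rintro ⟨i, rfl⟩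
        show (Finset.univ.filter fun k => u k ≠ if k = i then !u k else u k).card = 1
        have he : (Finset.univ.filter fun k => u k ≠ if k = i then !u k else u k) = {i} := by
          ext k
          simp only [Finset.mem_filter, Finset.mem_univ, true_and, Finset.mem_singleton]
          by_cases hk : k = i
          · simp only [if_pos hk, hk, iff_true]
            cases u k <;> simp
          · simp only [if_neg hk, hk, iff_false]
            simp
        rw [he, Finset.card_singleton]
    have hinj : Function.Injective (fun i : Fin d => fun j => if j = i then !u j else u j) := by
      intro i i' h
      by_contra hne
      have h1 := congrFun h i
      simp only [if_pos rfl, if_neg (by exact hne : i ≠ i')] at h1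
      cases u i <;> simp at h1
    rw [Fintype.card_subtype, himage, Finset.card_image_of_injective _ hinj,
      Finset.card_univ, Fintype.card_fin]
  unfold Tp
  set W := fun f : V d → Fin 4 => fun v : {v : V d // (cube d).Adj u v} => f v.1 with hWdef
  set Z := fun f : V d → Fin 4 =>
    Finset.image (fun v : {v : V d // (cube d).Adj u v} => f v.1) Finset.univ with hZdef
  -- values on the support
  have hvalX : ∀ w, pr p W w ≠ 0 → ∀ v : {v : V d // (cube d).Adj u v}, v.1 ∈ X →
      w v ∈ ({0,1} : Finset (Fin 4)) := by
    intro w hw v hv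
    obtain ⟨f, hf, hWf⟩ := exists_of_pr_ne_zero W hw
    rw [← hWf]
    exact hgood f hf v.1 hv
  have hvalY : ∀ w, pr p W w ≠ 0 → ∀ v : {v : V d // (cube d).Adj u v}, v.1 ∈ Y →
      w v ∈ ({2,3} : Finset (Fin 4)) := by
    intro w hw v hv
    obtain ⟨f, hf, hWf⟩ := exists_of_pr_ne_zero W hw
    rw [← hWf]
    exact hbad f hf v.1 hv
  have hprW0 : ∀ w, 0 ≤ pr p W w := pr_nonneg hp0 W
  -- the split of the entropy of W
  set suppP := (Finset.univ : Finset ({v : V d // (cube d).Adj u v} → Fin 4)).filter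
      (fun w => pr p W w ≠ 0) with hsuppP
  set sA := suppP.filter (fun w => (Finset.univ.image w).card ≤ 2) with hsA
  set sB := suppP.filter (fun w => ¬ (Finset.univ.image w).card ≤ 2) with hsB
  set q := ∑ w ∈ sA, pr p W w with hq
  set r := ∑ w ∈ sB, pr p W w with hr
  have hq0 : 0 ≤ q := Finset.sum_nonneg fun w _ => hprW0 w
  have hr0 : 0 ≤ r := Finset.sum_nonneg fun w _ => hprW0 w
  have hsupp_sum : ∑ w ∈ suppP, pr p W w = 1 := by
    rw [hsuppP, Finset.sum_filter_of_ne (fun w _ h => h), pr_total W, hp1]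
  have hqr : q + r = 1 := by
    rw [hq, hr, hsA, hsB, Finset.sum_filter_add_sum_filter_not]
    exact hsupp_sum
  -- card bounds
  have hcardA : sA.card ≤ 4 := by
    have h4 : (({0,1} : Finset (Fin 4)) ×ˢ ({2,3} : Finset (Fin 4))).card = 4 := by decide
    have key : ∀ w ∈ sA, ∀ v : {v : V d // (cube d).Adj u v},
        w v = if v.1 ∈ X then w ⟨x₀, hx₀adj⟩ else w ⟨y₀, hy₀adj⟩ := by
      intro w hw v
      obtain ⟨hwsupp, hwcard⟩ := Finset.mem_filter.1 hw
      have hwsupp' : pr p W w ≠ 0 := (Finset.mem_filter.1 hwsupp).2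
      have h2 : w ⟨x₀, hx₀adj⟩ ∈ ({0,1} : Finset (Fin 4)) := hvalX w hwsupp' _ hx₀X
      have h3 : w ⟨y₀, hy₀adj⟩ ∈ ({2,3} : Finset (Fin 4)) := hvalY w hwsupp' _ hy₀Y
      have hsub3 : ∀ a b c : Fin 4, a ≠ b → a ≠ c → b ≠ c →
          ({a, b, c} : Finset (Fin 4)).card = 3 := by decide
      by_cases hvX : v.1 ∈ X
      · rw [if_pos hvX]
        by_contra hne
        have h1 : w v ∈ ({0,1} : Finset (Fin 4)) := hvalX w hwsupp' v hvX
        have hsub : ({w v, w ⟨x₀, hx₀adj⟩, w ⟨y₀, hy₀adj⟩} : Finset (Fin 4)) ⊆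
            Finset.univ.image w := by
          intro a ha
          simp only [Finset.mem_insert, Finset.mem_singleton] at ha
          rcases ha with rfl | rfl | rfl
          exacts [Finset.mem_image_of_mem w (Finset.mem_univ _),
            Finset.mem_image_of_mem w (Finset.mem_univ _),
            Finset.mem_image_of_mem w (Finset.mem_univ _)]
        have hc3 : ({w v, w ⟨x₀, hx₀adj⟩, w ⟨y₀, hy₀adj⟩} : Finset (Fin 4)).card = 3 :=
          hsub3 _ _ _ hne (hclass _ _ h1 h3) (hclass _ _ h2 h3)
        have := Finset.card_le_card hsub
        omega
      · rw [if_neg hvX]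
        by_contra hne
        have hvY : v.1 ∈ Y := (hmemXY v).resolve_left hvX
        have h1 : w v ∈ ({2,3} : Finset (Fin 4)) := hvalY w hwsupp' v hvY
        have hsub : ({w ⟨x₀, hx₀adj⟩, w v, w ⟨y₀, hy₀adj⟩} : Finset (Fin 4)) ⊆
            Finset.univ.image w := by
          intro a ha
          simp only [Finset.mem_insert, Finset.mem_singleton] at ha
          rcases ha with rfl | rfl | rfl
          exacts [Finset.mem_image_of_mem w (Finset.mem_univ _),
            Finset.mem_image_of_mem w (Finset.mem_univ _),
            Finset.mem_image_of_mem w (Finset.mem_univ _)]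
        have hc3 : ({w ⟨x₀, hx₀adj⟩, w v, w ⟨y₀, hy₀adj⟩} : Finset (Fin 4)).card = 3 :=
          hsub3 _ _ _ (hclass _ _ h2 h1) (hclass _ _ h2 h3) hne
        have := Finset.card_le_card hsub
        omega
    have hle : sA.card ≤ (({0,1} : Finset (Fin 4)) ×ˢ ({2,3} : Finset (Fin 4))).card := by
      apply Finset.card_le_card_of_injOn (fun w => (w ⟨x₀, hx₀adj⟩, w ⟨y₀, hy₀adj⟩))
      · intro w hw
        have hwsupp' : pr p W w ≠ 0 := (Finset.mem_filter.1 ((Finset.mem_filter.1 hw).1)).2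
        exact Finset.mem_product.2 ⟨hvalX w hwsupp' _ hx₀X, hvalY w hwsupp' _ hy₀Y⟩
      · intro w hw w' hw' heq
        funext v
        rw [key w hw v, key w' hw' v]
        have e1 : w ⟨x₀, hx₀adj⟩ = w' ⟨x₀, hx₀adj⟩ := congrArg Prod.fst heq
        have e2 : w ⟨y₀, hy₀adj⟩ = w' ⟨y₀, hy₀adj⟩ := congrArg Prod.snd heq
        split_ifs
        · exact e1
        · exact e2
    omega
  have hcardB : sB.card ≤ 2 ^ d := by
    have hsub : sB ⊆ Fintype.piFinset (fun v : {v : V d // (cube d).Adj u v} =>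
        if v.1 ∈ X then ({0,1} : Finset (Fin 4)) else ({2,3} : Finset (Fin 4))) := by
      intro w hw
      obtain ⟨hwsupp, _⟩ := Finset.mem_filter.1 hw
      have hwsupp' : pr p W w ≠ 0 := (Finset.mem_filter.1 hwsupp).2
      rw [Fintype.mem_piFinset]
      intro v
      by_cases hvX : v.1 ∈ X
      · rw [if_pos hvX]; exact hvalX w hwsupp' v hvX
      · rw [if_neg hvX]
        exact hvalY w hwsupp' v ((hmemXY v).resolve_left hvX)
    calc sB.card ≤ _ := Finset.card_le_card hsub
      _ = 2 ^ d := by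
        rw [Fintype.card_piFinset]
        rw [Finset.prod_congr rfl (fun v _ => show (if v.1 ∈ X then ({0,1} : Finset (Fin 4))
          else ({2,3} : Finset (Fin 4))).card = 2 by split_ifs <;> decide)]
        rw [Finset.prod_const, Finset.card_univ, hcard]
  -- entropy bounds
  have hentW : ent p W = (∑ w ∈ sA, pr p W w * Real.logb 2 (pr p W w)⁻¹)
      + ∑ w ∈ sB, pr p W w * Real.logb 2 (pr p W w)⁻¹ := by
    rw [hsA, hsB, Finset.sum_filter_add_sum_filter_not, hsuppP]
    unfold ent
    refine (Finset.sum_filter_of_ne ?_).symm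
    intro w _ h h0
    exact h (by rw [h0, zero_mul])
  have hEA : ∑ w ∈ sA, pr p W w * Real.logb 2 (pr p W w)⁻¹
      ≤ q * (2 + Real.logb 2 q⁻¹) := by
    have h := entropy_sum_le sA (fun w => pr p W w) (fun w _ => hprW0 w) 4 hcardA
    rw [← hq, logb4] at h
    exact h
  have hEB : ∑ w ∈ sB, pr p W w * Real.logb 2 (pr p W w)⁻¹
      ≤ r * ((d:ℝ) + Real.logb 2 r⁻¹) := by
    have h := entropy_sum_le sB (fun w => pr p W w) (fun w _ => hprW0 w) (2^d) hcardB
    rw [← hr, logb2d d] at h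
    exact h
  have hH2 : q * Real.logb 2 q⁻¹ + r * Real.logb 2 r⁻¹ ≤ 1 := by
    have h := entropy_sum_le (Finset.univ : Finset (Fin 2)) ![q, r]
      (fun b _ => by fin_cases b
                     · simpa using hq0
                     · simpa using hr0) 2 (by simp)
    simp only [Fin.sum_univ_two, Matrix.cons_val_zero, Matrix.cons_val_one,
      Matrix.head_cons] at h
    rw [hqr] at h
    have h2 : Real.logb 2 ((2:ℕ):ℝ) = 1 := by
      norm_num [Real.logb_self_eq_one]
    rw [h2] at h
    simp only [inv_one, Real.logb_one] at h
    linarith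
  -- the conditional entropy bound
  have hcond : condEnt p (fun f => f u) Z ≤
      ∑ S ∈ Finset.univ.filter (fun S : Finset (Fin 4) => S.card ≤ 2), pr p Z S := by
    unfold condEnt
    rw [Finset.sum_filter]
    apply Finset.sum_le_sum
    intro S _
    by_cases hprS : pr p Z S = 0
    · rw [hprS, zero_mul]
      split_ifs <;> simp [hprS]
    · have hpos : 0 < pr p Z S := lt_of_le_of_ne (pr_nonneg hp0 Z S) (Ne.symm hprS)
      obtain ⟨f₀, hf₀, hZf₀⟩ := exists_of_pr_ne_zero Z hprS
      have hfx : f₀ x₀ ∈ S := by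
        rw [← hZf₀]
        exact Finset.mem_image_of_mem _
          (Finset.mem_univ (⟨x₀, hx₀adj⟩ : {v : V d // (cube d).Adj u v}))
      have hfy : f₀ y₀ ∈ S := by
        rw [← hZf₀]
        exact Finset.mem_image_of_mem _
          (Finset.mem_univ (⟨y₀, hy₀adj⟩ : {v : V d // (cube d).Adj u v}))
      have hxyne : f₀ x₀ ≠ f₀ y₀ :=
        hclass _ _ (hgood f₀ hf₀ x₀ hx₀X) (hbad f₀ hf₀ y₀ hy₀Y)
      have hS2 : 2 ≤ S.card := Finset.one_lt_card.2 ⟨_, hfx, _, hfy, hxyne⟩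
      have hmarg : ∑ t : Fin 4, pr p (fun ω => (ω u, Z ω)) (t, S) = pr p Z S :=
        pr_marginal (fun ω => ω u) Z S
      have hb0 : ∀ t : Fin 4, 0 ≤ pr p (fun ω => (ω u, Z ω)) (t, S) / pr p Z S :=
        fun t => div_nonneg (pr_nonneg hp0 _ _) (le_of_lt hpos)
      have hbsum : ∑ t : Fin 4, pr p (fun ω => (ω u, Z ω)) (t, S) / pr p Z S = 1 := by
        rw [← Finset.sum_div, hmarg]
        field_simp
      set st := Finset.univ.filter
        (fun t : Fin 4 => pr p (fun ω => (ω u, Z ω)) (t, S) / pr p Z S ≠ 0) with hst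
      have hdrop : ∑ t ∈ st, (pr p (fun ω => (ω u, Z ω)) (t, S) / pr p Z S) *
            Real.logb 2 (pr p (fun ω => (ω u, Z ω)) (t, S) / pr p Z S)⁻¹
          = ∑ t : Fin 4, (pr p (fun ω => (ω u, Z ω)) (t, S) / pr p Z S) *
            Real.logb 2 (pr p (fun ω => (ω u, Z ω)) (t, S) / pr p Z S)⁻¹ :=
        Finset.sum_filter_of_ne (fun t _ h h0 => h (by rw [h0, zero_mul]))
      have hdrop2 : ∑ t ∈ st, pr p (fun ω => (ω u, Z ω)) (t, S) / pr p Z S = 1 := by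
        rw [Finset.sum_filter_of_ne (fun t _ h => h)]
        exact hbsum
      have hstS : st ⊆ Sᶜ := by
        intro t ht
        rw [Finset.mem_compl]
        intro htS
        have hbt := (Finset.mem_filter.1 ht).2
        have hjt : pr p (fun ω => (ω u, Z ω)) (t, S) ≠ 0 := fun h => hbt (by rw [h, zero_div])
        obtain ⟨f, hf, hft⟩ := exists_of_pr_ne_zero _ hjt
        simp only [Prod.mk.injEq] at hft
        obtain ⟨h1, h2⟩ := hft
        rw [← h2] at htS
        simp only [hZdef, Finset.mem_image] at htS
        obtain ⟨v, _, hv⟩ := htS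
        exact hcol f hf u v.1 v.2 (h1.trans hv.symm)
      have hstcard : st.card ≤ 4 - S.card := by
        have h := Finset.card_le_card hstS
        rwa [Finset.card_compl, Fintype.card_fin] at h
      -- apply the core lemma
      by_cases hS : S.card ≤ 2
      · rw [if_pos hS]
        have hn : st.card ≤ 2 := by omega
        have hcore := entropy_sum_le st
          (fun t => pr p (fun ω => (ω u, Z ω)) (t, S) / pr p Z S)
          (fun t _ => hb0 t) 2 hn
        rw [hdrop2] at hcore
        have h2 : Real.logb 2 ((2:ℕ):ℝ) = 1 := by norm_num [Real.logb_self_eq_one]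
        rw [h2] at hcore
        simp only [inv_one, Real.logb_one, one_mul, add_zero] at hcore
        rw [hdrop] at hcore
        calc pr p Z S * ∑ t : Fin 4, (pr p (fun ω => (ω u, Z ω)) (t, S) / pr p Z S) *
              Real.logb 2 (pr p (fun ω => (ω u, Z ω)) (t, S) / pr p Z S)⁻¹
            ≤ pr p Z S * 1 := mul_le_mul_of_nonneg_left hcore (le_of_lt hpos)
          _ = pr p Z S := mul_one _
      · rw [if_neg hS]
        have hn : st.card ≤ 1 := by omega
        have hcore := entropy_sum_le st
          (fun t => pr p (fun ω => (ω u, Z ω)) (t, S) / pr p Z S)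
          (fun t _ => hb0 t) 1 hn
        rw [hdrop2] at hcore
        simp only [Nat.cast_one, Real.logb_one, inv_one, zero_add, one_mul, add_zero] at hcore
        rw [hdrop] at hcore
        calc pr p Z S * ∑ t : Fin 4, (pr p (fun ω => (ω u, Z ω)) (t, S) / pr p Z S) *
              Real.logb 2 (pr p (fun ω => (ω u, Z ω)) (t, S) / pr p Z S)⁻¹
            ≤ pr p Z S * 0 := mul_le_mul_of_nonneg_left hcore (le_of_lt hpos)
          _ = 0 := mul_zero _
  -- the filtered Z-sum equals q
  have hq2 : ∑ S ∈ Finset.univ.filter (fun S : Finset (Fin 4) => S.card ≤ 2), pr p Z S = q := by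
    have hq_eq : q = ∑ w ∈ Finset.univ.filter
        (fun w : {v : V d // (cube d).Adj u v} → Fin 4 => (Finset.univ.image w).card ≤ 2),
        pr p W w := by
      rw [hq, hsA, hsuppP, Finset.filter_filter]
      rw [show Finset.univ.filter (fun w : {v : V d // (cube d).Adj u v} → Fin 4 =>
          pr p W w ≠ 0 ∧ (Finset.univ.image w).card ≤ 2)
        = (Finset.univ.filter (fun w : {v : V d // (cube d).Adj u v} → Fin 4 =>
          (Finset.univ.image w).card ≤ 2)).filter (fun w => pr p W w ≠ 0) by
        rw [Finset.filter_filter]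
        exact Finset.filter_congr fun w _ => and_comm]
      exact Finset.sum_filter_of_ne (fun w _ h => h)
    rw [hq_eq, pr_sum_filter Z, pr_sum_filter W]
    refine Finset.sum_congr rfl fun f _ => ?_
    refine ite_congr ?_ (fun _ => rfl) (fun _ => rfl)
    simp only [Finset.mem_filter, Finset.mem_univ, true_and]
    rfl
  have hcond' : condEnt p (fun f => f u) Z ≤ q := le_trans hcond (le_of_eq hq2)
  have hentW' : ent p W ≤ q * (2 + Real.logb 2 q⁻¹) + r * ((d:ℝ) + Real.logb 2 r⁻¹) := by
    rw [hentW]; exact add_le_add hEA hEB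
  have hrd : r * (d:ℝ) + q * (d:ℝ) = (d:ℝ) := by
    rw [← add_mul, show r + q = 1 by linarith, one_mul]
  have hq1 : q ≤ 1 := by linarith
  have key : q * (2 + Real.logb 2 q⁻¹) + r * ((d:ℝ) + Real.logb 2 r⁻¹) + q * d
      ≤ (d:ℝ) + 4 := by nlinarith [hH2, hq1, hrd, hq0, hr0]
  calc (1/(d:ℝ)) * ent p W + condEnt p (fun f => f u) Z
      ≤ (1/(d:ℝ)) * (q * (2 + Real.logb 2 q⁻¹) + r * ((d:ℝ) + Real.logb 2 r⁻¹)) + q :=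
        add_le_add (mul_le_mul_of_nonneg_left hentW' (by positivity)) hcond'
    _ = (1/(d:ℝ)) * (q * (2 + Real.logb 2 q⁻¹) + r * ((d:ℝ) + Real.logb 2 r⁻¹) + q * d) := by
        field_simp
    _ ≤ (1/(d:ℝ)) * ((d:ℝ) + 4) := mul_le_mul_of_nonneg_left key (by positivity)
    _ = 1 + 4 / (d:ℝ) := by
        field_simp
end
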